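/- arXiv:2509.15850 — 3 statements merged into one kernel-verified Lean document; each statement's English description precedes it below -/
import Mathlib

section
/- Let V be a finite-dimensional real inner product space and let G be a subgroup of the group of linear isometric automorphisms of V. Suppose P is a finite normal subgroup of G that is generated by the reflections it contains. Then P has a complement in G: there exists a subgroup H of G such that P ∩ H is trivial and every element of G is a product of an element of P and an element of H (equivalently, P and H are complementary subgroups of G). -/
set_option linter.unusedSectionVars false
set_option linter.unusedVariables false
set_option maxHeartbeats 1000000

open scoped RealInnerProductSpace

variable {V : Type*} [NormedAddCommGroup V] [InnerProductSpace ℝ V] [FiniteDimensional ℝ V]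

/-- `r` is a reflection: there is a nonzero root `α` with `r α = -α` and `r` fixes
every vector orthogonal to `α`. -/
def IsReflection (r : V ≃ₗᵢ[ℝ] V) : Prop :=
  ∃ α : V, α ≠ 0 ∧ r α = -α ∧ ∀ v : V, ⟪α, v⟫ = 0 → r v = v

noncomputable def sa (α : V) : V ≃ₗᵢ[ℝ] V := Submodule.reflection (ℝ ∙ α)ᗮ

lemma sa_apply (α : V) (h : ‖α‖ = 1) (w : V) : sa α w = w - (2 * ⟪α, w⟫) • α := by
  have h1 : (ℝ ∙ α)ᗮ.starProjection w = w - (ℝ ∙ α).starProjection w :=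
    Submodule.starProjection_orthogonal_val w
  have h2 : (ℝ ∙ α).starProjection w = ⟪α, w⟫ • α :=
    Submodule.starProjection_unit_singleton ℝ h w
  rw [sa, Submodule.reflection_apply, h1, h2, two_smul]
  module

lemma sa_mul_self (α : V) : sa α * sa α = 1 := by
  ext w
  exact Submodule.reflection_involutive _ w

lemma sa_inv (α : V) : (sa α)⁻¹ = sa α := by
  rw [eq_comm, eq_inv_iff_mul_eq_one, sa_mul_self]

lemma sa_neg (α : V) : sa (-α) = sa α := by
  unfold sa
  congr 1
  have : -α = (-1 : ℝ) • α := by module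
  rw [this, Submodule.span_singleton_smul_eq (by norm_num : IsUnit (-1:ℝ))]

lemma isom_mul_apply (f g : V ≃ₗᵢ[ℝ] V) (w : V) : (f * g) w = f (g w) := rfl

lemma sa_conj (g : V ≃ₗᵢ[ℝ] V) (α : V) (h : ‖α‖ = 1) : g * sa α * g⁻¹ = sa (g α) := by
  have hg : ‖g α‖ = 1 := by rw [g.norm_map]; exact h
  ext w
  rw [isom_mul_apply, isom_mul_apply, sa_apply α h, sa_apply (g α) hg]
  have : ⟪g α, w⟫ = ⟪α, g⁻¹ w⟫ := by
    conv_lhs => rw [show w = g (g⁻¹ w) by simp [← isom_mul_apply]]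
    exact g.inner_map_map α (g⁻¹ w)
  rw [this, map_sub, map_smul]
  simp [← isom_mul_apply]

lemma sa_self (α : V) (h : ‖α‖ = 1) : sa α α = -α :=
  Submodule.reflection_orthogonalComplement_singleton_eq_neg α

/-- Every reflection is of the form `sa u` for a unit vector `u`. -/
lemma IsReflection.eq_sa {r : V ≃ₗᵢ[ℝ] V} (hr : IsReflection r) :
    ∃ u : V, ‖u‖ = 1 ∧ r = sa u := by
  obtain ⟨α, hα, hrα, hfix⟩ := hr
  have hn : ‖α‖ ≠ 0 := norm_ne_zero_iff.mpr hα
  set u : V := ‖α‖⁻¹ • α with hu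
  have hun : ‖u‖ = 1 := by
    rw [hu, norm_smul]
    simp [abs_of_nonneg (inv_nonneg.mpr (norm_nonneg α)), inv_mul_cancel₀ hn]
  refine ⟨u, hun, ?_⟩
  ext w
  have hw : w = ⟪u, w⟫ • u + (w - ⟪u, w⟫ • u) := by module
  have horth : ⟪α, w - ⟪u, w⟫ • u⟫ = 0 := by
    have hα2 : ⟪α, α⟫ = ‖α‖ * ‖α‖ := real_inner_self_eq_norm_mul_norm α
    rw [hu]
    rw [inner_sub_right, real_inner_smul_right, real_inner_smul_right,
      real_inner_smul_left, hα2]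
    field_simp
    ring
  have hru : r u = -u := by
    rw [hu, map_smul, hrα]; module
  calc r w = r (⟪u, w⟫ • u + (w - ⟪u, w⟫ • u)) := by rw [← hw]
    _ = ⟪u, w⟫ • r u + r (w - ⟪u, w⟫ • u) := by rw [map_add, map_smul]
    _ = ⟪u, w⟫ • (-u) + (w - ⟪u, w⟫ • u) := by rw [hru, hfix _ horth]
    _ = w - (2 * ⟪u, w⟫) • u := by module
    _ = sa u w := (sa_apply u hun w).symm

/-- Product of a reversed list of reflections is the inverse. -/
lemma prod_reverse_sa (l : List V) :
    ((l.map sa).prod)⁻¹ = ((l.reverse.map sa).prod : V ≃ₗᵢ[ℝ] V) := by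
  induction l with
  | nil => simp
  | cons γ t ih =>
      simp only [List.map_cons, List.prod_cons, List.reverse_cons, List.map_append,
        List.prod_append, List.map_nil, List.prod_nil, List.prod_singleton, mul_inv_rev, ih,
        sa_inv, mul_one]

section Core

variable (Φ : Finset V) (v : V)

/-- Products of reflections in roots from `Φ` preserve `Φ`. -/
lemma prod_mem_phi (hcl : ∀ α ∈ Φ, ∀ β ∈ Φ, sa α β ∈ Φ) :
    ∀ l : List V, (∀ γ ∈ l, γ ∈ Φ) → ∀ β ∈ Φ, ((l.map sa).prod : V ≃ₗᵢ[ℝ] V) β ∈ Φ := by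
  intro l
  induction l with
  | nil => intro _ β hβ; simpa using hβ
  | cons γ t ih =>
      intro hl β hβ
      have h1 : ((t.map sa).prod : V ≃ₗᵢ[ℝ] V) β ∈ Φ := ih (fun x hx => hl x (by simp [hx])) β hβ
      have h2 : γ ∈ Φ := hl γ (by simp)
      simpa [List.prod_cons, isom_mul_apply] using hcl γ h2 _ h1

/-- The exchange lemma. -/
lemma exchange (hu : ∀ α ∈ Φ, ‖α‖ = 1) (hcl : ∀ α ∈ Φ, ∀ β ∈ Φ, sa α β ∈ Φ)
    (hv : ∀ α ∈ Φ, ⟪v, α⟫ ≠ 0)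
    (Δ : Finset V) (hΔΦ : ∀ δ ∈ Δ, δ ∈ Φ) (hΔpos : ∀ δ ∈ Δ, 0 < ⟪v, δ⟫)
    (F5 : ∀ δ ∈ Δ, ∀ β ∈ Φ, 0 < ⟪v, β⟫ → β ≠ δ → 0 < ⟪v, sa δ β⟫) :
    ∀ l : List V, (∀ γ ∈ l, γ ∈ Δ) → ∀ α ∈ Δ, ⟪v, ((l.map sa).prod : V ≃ₗᵢ[ℝ] V) α⟫ < 0 →
    ∃ l' : List V, (∀ γ ∈ l', γ ∈ Δ) ∧ l'.length + 1 = l.length ∧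
      (l.map sa).prod * sa α = ((l'.map sa).prod : V ≃ₗᵢ[ℝ] V) := by
  intro l
  induction l with
  | nil =>
      intro _ α hα hneg
      simp only [List.map_nil, List.prod_nil] at hneg
      exact absurd (hΔpos α hα) (by simpa using not_lt.mpr hneg.le)
  | cons γ t ih =>
      intro hl α hα hneg
      have hγ : γ ∈ Δ := hl γ (by simp)
      have htl : ∀ x ∈ t, x ∈ Δ := fun x hx => hl x (by simp [hx])
      set u : V ≃ₗᵢ[ℝ] V := (t.map sa).prod with hudef
      have huα : u α ∈ Φ := prod_mem_phi Φ hcl t (fun x hx => hΔΦ x (htl x hx)) α (hΔΦ α hα)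
      have hprod : (((γ :: t).map sa).prod : V ≃ₗᵢ[ℝ] V) = sa γ * u := by
        simp [List.prod_cons, hudef]
      by_cases hcase : ⟪v, u α⟫ < 0
      · obtain ⟨t', ht', hlen, heq⟩ := ih htl α hα hcase
        refine ⟨γ :: t', fun x hx => ?_, by simp [← hlen], ?_⟩
        · rcases List.mem_cons.mp hx with h | h
          · exact h ▸ hγ
          · exact ht' x h
        · rw [hprod, mul_assoc, heq]
          simp [List.prod_cons]
      · -- u α is a positive root; since sa γ (u α) is negative, u α = γ
        have hupos : 0 < ⟪v, u α⟫ := (hv _ huα).lt_or_gt.resolve_left hcase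
        have huγ : u α = γ := by
          by_contra hne
          have := F5 γ hγ (u α) huα hupos hne
          rw [hprod] at hneg
          rw [isom_mul_apply] at hneg
          exact absurd this (not_lt.mpr hneg.le)
        -- then sa γ = u * sa α * u⁻¹, so (γ::t) * sa α = u
        have hconj : sa γ = u * sa α * u⁻¹ := by
          rw [← huγ, sa_conj u α (hu α (hΔΦ α hα))]
        refine ⟨t, htl, by simp, ?_⟩
        rw [hprod, mul_assoc, hconj]
        group
        rw [mul_assoc, sa_mul_self, mul_one]

/-- Key: a word over Δ whose product maps the positive side into itself is trivial. -/
lemma noword (hu : ∀ α ∈ Φ, ‖α‖ = 1) (hcl : ∀ α ∈ Φ, ∀ β ∈ Φ, sa α β ∈ Φ)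
    (hv : ∀ α ∈ Φ, ⟪v, α⟫ ≠ 0)
    (Δ : Finset V) (hΔΦ : ∀ δ ∈ Δ, δ ∈ Φ) (hΔpos : ∀ δ ∈ Δ, 0 < ⟪v, δ⟫)
    (F5 : ∀ δ ∈ Δ, ∀ β ∈ Φ, 0 < ⟪v, β⟫ → β ≠ δ → 0 < ⟪v, sa δ β⟫) :
    ∀ n : ℕ, ∀ l : List V, l.length ≤ n → (∀ γ ∈ l, γ ∈ Δ) →
    (∀ α ∈ Φ, 0 < ⟪v, α⟫ → 0 < ⟪v, ((l.map sa).prod : V ≃ₗᵢ[ℝ] V) α⟫) →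
    ((l.map sa).prod : V ≃ₗᵢ[ℝ] V) = 1 := by
  intro n
  induction n with
  | zero =>
      intro l hlen _ _
      rw [List.length_eq_zero_iff.mp (Nat.le_zero.mp hlen)]
      simp
  | succ n ih =>
      intro l hlen hlΔ hpos
      rcases List.eq_nil_or_concat l with rfl | ⟨t, α, rfl⟩
      · simp
      · rw [List.concat_eq_append] at hlen hlΔ hpos ⊢
        have hα : α ∈ Δ := hlΔ α (by simp)
        have hαΦ : α ∈ Φ := hΔΦ α hα
        have htl : ∀ x ∈ t, x ∈ Δ := fun x hx => hlΔ x (by simp [hx])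
        set w : V ≃ₗᵢ[ℝ] V := ((t ++ [α]).map sa).prod with hw
        have hsplit : w = (t.map sa).prod * sa α := by
          simp [hw, List.prod_append]
        have htprod : ((t.map sa).prod : V ≃ₗᵢ[ℝ] V) = w * sa α := by
          rw [hsplit, mul_assoc, sa_mul_self, mul_one]
        -- (prod t) α = w (sa α α) = w (-α) = -(w α), which is negative
        have hwα : 0 < ⟪v, w α⟫ := hpos α hαΦ (hΔpos α hα)
        have hneg : ⟪v, ((t.map sa).prod : V ≃ₗᵢ[ℝ] V) α⟫ < 0 := by
          rw [htprod, isom_mul_apply, sa_self α (hu α hαΦ), map_neg, inner_neg_right]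
          linarith
        obtain ⟨t', ht', hlen', heq⟩ :=
          exchange Φ v hu hcl hv Δ hΔΦ hΔpos F5 t htl α hα hneg
        rw [htprod, mul_assoc, sa_mul_self, mul_one] at heq
        -- w = prod t', strictly shorter
        have hlen'' : t'.length ≤ n := by
          simp only [List.length_append, List.length_cons, List.length_nil] at hlen
          omega
        have hres := ih t' hlen'' ht' (fun β hβ hβp => by rw [← heq]; exact hpos β hβ hβp)
        show w = 1
        rw [heq, hres]

/-- Existence of a "simple system" for the positive roots. -/
lemma simple_exists (hu : ∀ α ∈ Φ, ‖α‖ = 1) (hcl : ∀ α ∈ Φ, ∀ β ∈ Φ, sa α β ∈ Φ)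
    (hv : ∀ α ∈ Φ, ⟪v, α⟫ ≠ 0) :
    ∃ Δ : Finset V, (∀ δ ∈ Δ, δ ∈ Φ ∧ 0 < ⟪v, δ⟫) ∧
      (∀ β ∈ Φ, 0 < ⟪v, β⟫ → ∃ c : V → ℝ, (∀ γ ∈ Δ, 0 ≤ c γ) ∧ β = ∑ γ ∈ Δ, c γ • γ) ∧
      (∀ δ ∈ Δ, ∀ β ∈ Φ, 0 < ⟪v, β⟫ → β ≠ δ → 0 < ⟪v, sa δ β⟫) := by
  classical
  set Pi : Finset V := Φ.filter (fun α => 0 < ⟪v, α⟫) with hPi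
  have hPimem : ∀ γ, γ ∈ Pi ↔ γ ∈ Φ ∧ 0 < ⟪v, γ⟫ := by
    intro γ; simp [hPi, Finset.mem_filter]
  -- the collection of "good" subsets
  set good : Finset V → Prop := fun S =>
    ∀ β ∈ Pi, ∃ c : V → ℝ, (∀ γ ∈ S, 0 ≤ c γ) ∧ β = ∑ γ ∈ S, c γ • γ with hgooddef
  have hgoodPi : good Pi := by
    intro β hβ
    refine ⟨fun γ => if γ = β then 1 else 0, fun γ _ => by positivity, ?_⟩
    rw [Finset.sum_eq_single_of_mem β hβ (fun γ _ hne => by simp [hne])]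
    simp
  set T : Finset (Finset V) := Pi.powerset.filter good with hT
  have hPiT : Pi ∈ T := by
    rw [hT, Finset.mem_filter, Finset.mem_powerset]
    exact ⟨le_refl _, hgoodPi⟩
  obtain ⟨Δ, hΔT, hmin⟩ := Finset.exists_min_image T Finset.card ⟨Pi, hPiT⟩
  rw [hT, Finset.mem_filter, Finset.mem_powerset] at hΔT
  obtain ⟨hΔPi, hgood⟩ := hΔT
  have hΔmem : ∀ δ ∈ Δ, δ ∈ Φ ∧ 0 < ⟪v, δ⟫ := fun δ hδ => (hPimem δ).mp (hΔPi hδ)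
  -- zero-combination lemma
  have ZC : ∀ c : V → ℝ, (∀ γ ∈ Δ, 0 ≤ c γ) → ∑ γ ∈ Δ, c γ • γ = 0 → ∀ γ ∈ Δ, c γ = 0 := by
    intro c hc hsum γ hγ
    have h0 : ∑ γ ∈ Δ, c γ * ⟪v, γ⟫ = 0 := by
      have := congrArg (fun x : V => ⟪v, x⟫) hsum
      simpa [inner_sum, real_inner_smul_right] using this
    have key := (Finset.sum_eq_zero_iff_of_nonneg
      (fun γ hγ => mul_nonneg (hc γ hγ) (le_of_lt (hΔmem γ hγ).2))).mp h0 γ hγ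
    have := (hΔmem γ hγ).2
    nlinarith [key]
  -- erase lemma: no element of Δ is a nonneg combination of the others
  have ER : ∀ δ ∈ Δ, ¬ ∃ d : V → ℝ, (∀ γ ∈ Δ.erase δ, 0 ≤ d γ) ∧
      δ = ∑ γ ∈ Δ.erase δ, d γ • γ := by
    rintro δ hδ ⟨d, hd, hδeq⟩
    have hgood' : good (Δ.erase δ) := by
      intro β hβ
      obtain ⟨c, hc, hceq⟩ := hgood β hβ
      refine ⟨fun γ => c γ + c δ * d γ, fun γ hγ =>
        add_nonneg (hc γ (Finset.mem_of_mem_erase hγ)) (mul_nonneg (hc δ hδ) (hd γ hγ)), ?_⟩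
      calc β = ∑ γ ∈ Δ, c γ • γ := hceq
        _ = ∑ γ ∈ Δ.erase δ, c γ • γ + c δ • δ := (Finset.sum_erase_add Δ _ hδ).symm
        _ = ∑ γ ∈ Δ.erase δ, c γ • γ + c δ • (∑ γ ∈ Δ.erase δ, d γ • γ) := by rw [← hδeq]
        _ = ∑ γ ∈ Δ.erase δ, (c γ + c δ * d γ) • γ := by
            rw [Finset.smul_sum, ← Finset.sum_add_distrib]
            exact Finset.sum_congr rfl (fun γ _ => by rw [smul_smul, ← add_smul])
    have hT' : Δ.erase δ ∈ T := by
      rw [hT, Finset.mem_filter, Finset.mem_powerset]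
      exact ⟨le_trans (Finset.erase_subset δ Δ) hΔPi, hgood'⟩
    have := hmin _ hT'
    have := Finset.card_erase_lt_of_mem hδ
    omega
  -- F3: pairwise nonpositive inner products on Δ
  have F3 : ∀ α ∈ Δ, ∀ β ∈ Δ, α ≠ β → ⟪α, β⟫ ≤ 0 := by
    intro α hαΔ β hβΔ hne
    by_contra hcon
    push_neg at hcon
    set c : ℝ := ⟪α, β⟫ with hc
    obtain ⟨hαΦ, hαpos⟩ := hΔmem α hαΔ
    obtain ⟨hβΦ, hβpos⟩ := hΔmem β hβΔ
    have hβ'Φ : sa α β ∈ Φ := hcl α hαΦ β hβΦ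
    have hβ'eq : sa α β = β - (2 * c) • α := sa_apply α (hu α hαΦ) β
    rcases (hv _ hβ'Φ).lt_or_gt with hneg | hpos
    · -- sa α β is a negative root : -(sa α β) ∈ Pi
      have hmΦ : -(sa α β) ∈ Φ := by
        have := hcl _ hβ'Φ _ hβ'Φ
        rwa [sa_self _ (hu _ hβ'Φ)] at this
      have hmpos : 0 < ⟪v, -(sa α β)⟫ := by rw [inner_neg_right]; linarith
      obtain ⟨e, he, heeq⟩ := hgood _ ((hPimem _).mpr ⟨hmΦ, hmpos⟩)
      have hmval : -(sa α β) = (2 * c) • α - β := by rw [hβ'eq]; module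
      -- (2c)•α = e α • α + ∑_{erase α} (e γ + [γ = β]) • γ
      have key2 : (2 * c - e α) • α = ∑ γ ∈ Δ.erase α, (e γ + if γ = β then 1 else 0) • γ := by
        have h1 : ∑ γ ∈ Δ, e γ • γ = e α • α + ∑ γ ∈ Δ.erase α, e γ • γ := by
          rw [add_comm, Finset.sum_erase_add Δ _ hαΔ]
        have h2 : β = ∑ γ ∈ Δ.erase α, (if γ = β then (1:ℝ) else 0) • γ := by
          rw [Finset.sum_eq_single_of_mem β (Finset.mem_erase.mpr ⟨hne.symm, hβΔ⟩)
            (fun γ _ hneγ => by simp [hneγ])]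
          simp
        have h3 : (2 * c) • α - β = e α • α + ∑ γ ∈ Δ.erase α, e γ • γ := by
          rw [← h1, ← heeq, hmval]
        have hsplit2 : ∑ γ ∈ Δ.erase α, (e γ + if γ = β then 1 else 0) • γ
            = ∑ γ ∈ Δ.erase α, e γ • γ + ∑ γ ∈ Δ.erase α, (if γ = β then (1:ℝ) else 0) • γ := by
          rw [← Finset.sum_add_distrib]
          exact Finset.sum_congr rfl (fun γ _ => by rw [add_smul])
        have h6 : ∑ γ ∈ Δ.erase α, e γ • γ = (2 * c) • α - β - e α • α := by
          rw [h3]; module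
        rw [hsplit2, ← h2, h6, sub_smul]
        module
      rcases lt_or_ge (e α) (2 * c) with h1 | h1
      · -- α is nonneg combination of the others
        refine ER α hαΔ ⟨fun γ => (2 * c - e α)⁻¹ * (e γ + if γ = β then 1 else 0),
          fun γ hγ => mul_nonneg (inv_nonneg.mpr (by linarith))
            (add_nonneg (he γ (Finset.mem_of_mem_erase hγ)) (by positivity)), ?_⟩
        have hne0 : (2 * c - e α) ≠ 0 := by linarith
        calc α = (2 * c - e α)⁻¹ • ((2 * c - e α) • α) := by
                rw [smul_smul, inv_mul_cancel₀ hne0, one_smul]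
          _ = (2 * c - e α)⁻¹ • ∑ γ ∈ Δ.erase α, (e γ + if γ = β then 1 else 0) • γ := by
                rw [key2]
          _ = ∑ γ ∈ Δ.erase α, ((2 * c - e α)⁻¹ * (e γ + if γ = β then 1 else 0)) • γ := by
                rw [Finset.smul_sum]
                exact Finset.sum_congr rfl (fun γ _ => by rw [smul_smul])
      · -- zero combination with positive coefficient at β
        set g : V → ℝ := fun γ => if γ = α then e α - 2 * c else e γ + if γ = β then 1 else 0
          with hg
        have hgsum : ∑ γ ∈ Δ, g γ • γ = 0 := by
          have h4 : ∑ γ ∈ Δ, g γ • γ = g α • α + ∑ γ ∈ Δ.erase α, g γ • γ := by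
            rw [add_comm, Finset.sum_erase_add Δ _ hαΔ]
          rw [h4]
          have h5 : ∑ γ ∈ Δ.erase α, g γ • γ
              = ∑ γ ∈ Δ.erase α, (e γ + if γ = β then 1 else 0) • γ := by
            refine Finset.sum_congr rfl (fun γ hγ => ?_)
            have : γ ≠ α := (Finset.mem_erase.mp hγ).1
            simp [hg, this]
          rw [h5, ← key2]
          have : g α = e α - 2 * c := by simp [hg]
          rw [this]; module
        have hgnn : ∀ γ ∈ Δ, 0 ≤ g γ := by
          intro γ hγ
          by_cases h : γ = α
          · simp [hg, h]; linarith
          · simp only [hg, if_neg h]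
            exact add_nonneg (he γ hγ) (by positivity)
        have hzero := ZC g hgnn hgsum β hβΔ
        have hβval : g β = e β + 1 := by simp [hg, Ne.symm hne]
        rw [hβval] at hzero
        have := he β hβΔ
        linarith
    · -- sa α β is a positive root
      obtain ⟨e, he, heeq⟩ := hgood _ ((hPimem _).mpr ⟨hβ'Φ, hpos⟩)
      have hval : β = (2 * c) • α + sa α β := by rw [hβ'eq]; module
      have key : (1 - e β) • β = ∑ γ ∈ Δ.erase β, (e γ + if γ = α then 2 * c else 0) • γ := by
        have h1 : ∑ γ ∈ Δ, e γ • γ = e β • β + ∑ γ ∈ Δ.erase β, e γ • γ := by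
          rw [add_comm, Finset.sum_erase_add Δ _ hβΔ]
        have h2 : (2 * c) • α = ∑ γ ∈ Δ.erase β, (if γ = α then 2 * c else 0) • γ := by
          rw [Finset.sum_eq_single_of_mem α (Finset.mem_erase.mpr ⟨hne, hαΔ⟩)
            (fun γ _ hneγ => by simp [hneγ])]
          simp
        have h3 : β = (2 * c) • α + (e β • β + ∑ γ ∈ Δ.erase β, e γ • γ) := by
          rw [← h1, ← heeq, ← hval]
        have hsplit2 : ∑ γ ∈ Δ.erase β, (e γ + if γ = α then 2 * c else 0) • γ
            = ∑ γ ∈ Δ.erase β, e γ • γ + ∑ γ ∈ Δ.erase β, (if γ = α then 2 * c else 0) • γ := by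
          rw [← Finset.sum_add_distrib]
          exact Finset.sum_congr rfl (fun γ _ => by rw [add_smul])
        have h6 : ∑ γ ∈ Δ.erase β, e γ • γ = β - (2 * c) • α - e β • β := by
          linear_combination (norm := module) -h3
        rw [hsplit2, ← h2, h6, sub_smul]
        module
      rcases lt_or_ge (e β) 1 with h1 | h1
      · refine ER β hβΔ ⟨fun γ => (1 - e β)⁻¹ * (e γ + if γ = α then 2 * c else 0),
          fun γ hγ => mul_nonneg (inv_nonneg.mpr (by linarith))
            (add_nonneg (he γ (Finset.mem_of_mem_erase hγ)) (by positivity)), ?_⟩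
        have hne0 : (1 - e β) ≠ 0 := by linarith
        calc β = (1 - e β)⁻¹ • ((1 - e β) • β) := by
                rw [smul_smul, inv_mul_cancel₀ hne0, one_smul]
          _ = (1 - e β)⁻¹ • ∑ γ ∈ Δ.erase β, (e γ + if γ = α then 2 * c else 0) • γ := by
                rw [key]
          _ = ∑ γ ∈ Δ.erase β, ((1 - e β)⁻¹ * (e γ + if γ = α then 2 * c else 0)) • γ := by
                rw [Finset.smul_sum]
                exact Finset.sum_congr rfl (fun γ _ => by rw [smul_smul])
      · set g : V → ℝ := fun γ => if γ = β then e β - 1 else e γ + if γ = α then 2 * c else 0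
          with hg
        have hgsum : ∑ γ ∈ Δ, g γ • γ = 0 := by
          have h4 : ∑ γ ∈ Δ, g γ • γ = g β • β + ∑ γ ∈ Δ.erase β, g γ • γ := by
            rw [add_comm, Finset.sum_erase_add Δ _ hβΔ]
          rw [h4]
          have h5 : ∑ γ ∈ Δ.erase β, g γ • γ
              = ∑ γ ∈ Δ.erase β, (e γ + if γ = α then 2 * c else 0) • γ := by
            refine Finset.sum_congr rfl (fun γ hγ => ?_)
            have : γ ≠ β := (Finset.mem_erase.mp hγ).1
            simp [hg, this]
          rw [h5, ← key]
          have : g β = e β - 1 := by simp [hg]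
          rw [this]; module
        have hgnn : ∀ γ ∈ Δ, 0 ≤ g γ := by
          intro γ hγ
          by_cases h : γ = β
          · simp [hg, h]; linarith
          · simp only [hg, if_neg h]
            exact add_nonneg (he γ hγ) (by positivity)
        have hzero := ZC g hgnn hgsum α hαΔ
        have hαval : g α = e α + 2 * c := by simp [hg, hne]
        rw [hαval] at hzero
        have := he α hαΔ
        linarith
  -- F4: linear independence of Δ
  have half : ∀ c : V → ℝ, ∑ γ ∈ Δ, c γ • γ = 0 → ∀ γ ∈ Δ, c γ ≤ 0 := by
    intro c hsum
    by_contra hcon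
    push_neg at hcon
    obtain ⟨γ0, hγ0, hγ0pos⟩ := hcon
    set Pp : Finset V := Δ.filter (fun γ => 0 < c γ) with hPp
    set Nn : Finset V := Δ.filter (fun γ => ¬ 0 < c γ) with hNn
    have hsplit : ∑ γ ∈ Pp, c γ • γ + ∑ γ ∈ Nn, c γ • γ = 0 := by
      rw [hPp, hNn, Finset.sum_filter_add_sum_filter_not]
      exact hsum
    set x : V := ∑ γ ∈ Pp, c γ • γ with hx
    have hx2 : x = ∑ γ ∈ Nn, (- c γ) • γ := by
      rw [show (∑ γ ∈ Nn, (- c γ) • γ) = - ∑ γ ∈ Nn, c γ • γ by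
        rw [← Finset.sum_neg_distrib]
        exact Finset.sum_congr rfl (fun γ _ => by rw [neg_smul])]
      rw [hx]; linear_combination (norm := module) hsplit
    have hxx : ⟪x, x⟫ ≤ 0 := by
      nth_rewrite 2 [hx2]
      nth_rewrite 1 [hx]
      rw [sum_inner]
      refine Finset.sum_nonpos (fun γ hγ => ?_)
      rw [real_inner_smul_left, inner_sum]
      have hγΔ : γ ∈ Δ := Finset.mem_of_mem_filter γ hγ
      have hcγ : 0 < c γ := (Finset.mem_filter.mp hγ).2
      refine mul_nonpos_of_nonneg_of_nonpos (le_of_lt hcγ) ?_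
      refine Finset.sum_nonpos (fun δ hδ => ?_)
      rw [real_inner_smul_right]
      have hδΔ : δ ∈ Δ := Finset.mem_of_mem_filter δ hδ
      have hcδ : ¬ 0 < c δ := (Finset.mem_filter.mp hδ).2
      have hneδ : γ ≠ δ := fun h => hcδ (h ▸ hcγ)
      have := F3 γ hγΔ δ hδΔ hneδ
      nlinarith [this, not_lt.mp hcδ]
    have hx0 : x = 0 := real_inner_self_nonpos.mp hxx
    have hvx : ∑ γ ∈ Pp, c γ * ⟪v, γ⟫ = 0 := by
      have : ⟪v, x⟫ = 0 := by rw [hx0, inner_zero_right]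
      rw [hx, inner_sum] at this
      simpa [real_inner_smul_right] using this
    have hγ0Pp : γ0 ∈ Pp := Finset.mem_filter.mpr ⟨hγ0, hγ0pos⟩
    have := (Finset.sum_eq_zero_iff_of_nonneg (fun γ hγ =>
      mul_nonneg (le_of_lt (Finset.mem_filter.mp hγ).2)
        (le_of_lt (hΔmem γ (Finset.mem_of_mem_filter γ hγ)).2))).mp hvx γ0 hγ0Pp
    nlinarith [(hΔmem γ0 hγ0).2]
  have F4 : ∀ c : V → ℝ, ∑ γ ∈ Δ, c γ • γ = 0 → ∀ γ ∈ Δ, c γ = 0 := by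
    intro c hsum γ hγ
    have h1 := half c hsum γ hγ
    have h2 := half (fun γ => - c γ) (by
      rw [show (∑ γ ∈ Δ, (fun γ => - c γ) γ • γ) = - ∑ γ ∈ Δ, c γ • γ by
        rw [← Finset.sum_neg_distrib]
        exact Finset.sum_congr rfl (fun γ _ => by rw [neg_smul])]
      rw [hsum, neg_zero]) γ hγ
    linarith
  -- F5
  have F5 : ∀ δ ∈ Δ, ∀ β ∈ Φ, 0 < ⟪v, β⟫ → β ≠ δ → 0 < ⟪v, sa δ β⟫ := by
    intro δ hδΔ β hβΦ hβpos hne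
    obtain ⟨hδΦ, hδpos⟩ := hΔmem δ hδΔ
    obtain ⟨cc, hcc, hcceq⟩ := hgood β ((hPimem β).mpr ⟨hβΦ, hβpos⟩)
    -- find γ0 ≠ δ with positive coefficient
    have hexists : ∃ γ0 ∈ Δ, γ0 ≠ δ ∧ 0 < cc γ0 := by
      by_contra hno
      push_neg at hno
      have hβδ : β = cc δ • δ := by
        rw [hcceq]
        rw [Finset.sum_eq_single_of_mem δ hδΔ (fun γ hγ hneγ => by
          have h0 : cc γ = 0 := le_antisymm (hno γ hγ hneγ) (hcc γ hγ)
          rw [h0, zero_smul])]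
      have hccδ : 0 < cc δ := by
        have : ⟪v, β⟫ = cc δ * ⟪v, δ⟫ := by rw [hβδ, real_inner_smul_right]
        nlinarith
      have hnorm : ‖β‖ = |cc δ| * ‖δ‖ := by rw [hβδ, norm_smul]; simp
      rw [hu β hβΦ, hu δ hδΦ, mul_one, abs_of_pos hccδ] at hnorm
      rw [← hnorm, one_smul] at hβδ
      exact hne hβδ
    obtain ⟨γ0, hγ0Δ, hγ0ne, hγ0pos⟩ := hexists
    set c2 : ℝ := ⟪δ, β⟫ with hc2
    by_contra hcon
    have hβ'Φ : sa δ β ∈ Φ := hcl δ hδΦ β hβΦ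
    have hβ'neg : ⟪v, sa δ β⟫ < 0 := (hv _ hβ'Φ).lt_or_gt.resolve_right hcon
    have hmΦ : -(sa δ β) ∈ Φ := by
      have := hcl _ hβ'Φ _ hβ'Φ
      rwa [sa_self _ (hu _ hβ'Φ)] at this
    have hmpos : 0 < ⟪v, -(sa δ β)⟫ := by rw [inner_neg_right]; linarith
    obtain ⟨e, he, heeq⟩ := hgood _ ((hPimem _).mpr ⟨hmΦ, hmpos⟩)
    have hmval : -(sa δ β) = (2 * c2) • δ - β := by rw [sa_apply δ (hu δ hδΦ) β]; module
    set g : V → ℝ := fun γ => cc γ + e γ - (if γ = δ then 2 * c2 else 0) with hg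
    have hgsum : ∑ γ ∈ Δ, g γ • γ = 0 := by
      have h2 : (2 * c2) • δ = ∑ γ ∈ Δ, (if γ = δ then 2 * c2 else 0) • γ := by
        rw [Finset.sum_eq_single_of_mem δ hδΔ (fun γ _ hneγ => by simp [hneγ])]
        simp
      have : ∑ γ ∈ Δ, g γ • γ
          = ∑ γ ∈ Δ, cc γ • γ + ∑ γ ∈ Δ, e γ • γ - ∑ γ ∈ Δ, (if γ = δ then 2 * c2 else 0) • γ := by
        rw [← Finset.sum_add_distrib, ← Finset.sum_sub_distrib]
        exact Finset.sum_congr rfl (fun γ _ => by rw [hg, sub_smul, add_smul])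
      rw [this, ← hcceq, ← heeq, ← h2, hmval]
      module
    have hzero := F4 g hgsum γ0 hγ0Δ
    have hval : g γ0 = cc γ0 + e γ0 := by simp [hg, hγ0ne]
    rw [hval] at hzero
    have := he γ0 hγ0Δ
    linarith
  exact ⟨Δ, hΔmem, fun β hβ hβp => hgood β ((hPimem β).mpr ⟨hβ, hβp⟩), F5⟩

/-- Every reflection in a positive root lies in the group generated by simple reflections. -/
lemma refl_mem_closure (hu : ∀ α ∈ Φ, ‖α‖ = 1) (hcl : ∀ α ∈ Φ, ∀ β ∈ Φ, sa α β ∈ Φ)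
    (hv : ∀ α ∈ Φ, ⟪v, α⟫ ≠ 0)
    (Δ : Finset V) (hΔmem : ∀ δ ∈ Δ, δ ∈ Φ ∧ 0 < ⟪v, δ⟫)
    (hNN : ∀ β ∈ Φ, 0 < ⟪v, β⟫ → ∃ c : V → ℝ, (∀ γ ∈ Δ, 0 ≤ c γ) ∧ β = ∑ γ ∈ Δ, c γ • γ)
    (F5 : ∀ δ ∈ Δ, ∀ β ∈ Φ, 0 < ⟪v, β⟫ → β ≠ δ → 0 < ⟪v, sa δ β⟫) :
    ∀ β ∈ Φ, 0 < ⟪v, β⟫ →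
      sa β ∈ Subgroup.closure {r : V ≃ₗᵢ[ℝ] V | ∃ δ ∈ Δ, r = sa δ} := by
  classical
  suffices h : ∀ n : ℕ, ∀ β ∈ Φ, 0 < ⟪v, β⟫ →
      (Φ.filter (fun γ => ⟪v, γ⟫ < ⟪v, β⟫)).card < n →
      sa β ∈ Subgroup.closure {r : V ≃ₗᵢ[ℝ] V | ∃ δ ∈ Δ, r = sa δ} by
    intro β hβ hβp
    exact h ((Φ.filter (fun γ => ⟪v, γ⟫ < ⟪v, β⟫)).card + 1) β hβ hβp (by omega)
  intro n
  induction n with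
  | zero => intro β _ _ hcard; omega
  | succ n ih =>
      intro β hβΦ hβpos hcard
      obtain ⟨c, hc, hceq⟩ := hNN β hβΦ hβpos
      have h1 : (1 : ℝ) = ∑ γ ∈ Δ, c γ * ⟪γ, β⟫ := by
        have hββ : ⟪β, β⟫ = 1 := by
          rw [real_inner_self_eq_norm_mul_norm, hu β hβΦ, mul_one]
        calc (1:ℝ) = ⟪β, β⟫ := hββ.symm
          _ = ⟪∑ γ ∈ Δ, c γ • γ, β⟫ := by rw [← hceq]
          _ = ∑ γ ∈ Δ, c γ * ⟪γ, β⟫ := by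
              rw [sum_inner]
              exact Finset.sum_congr rfl (fun γ _ => real_inner_smul_left γ β (c γ))
      have hexists : ∃ δ ∈ Δ, 0 < c δ * ⟪δ, β⟫ := by
        by_contra hno
        push_neg at hno
        have : ∑ γ ∈ Δ, c γ * ⟪γ, β⟫ ≤ 0 := Finset.sum_nonpos hno
        linarith
      obtain ⟨δ, hδΔ, hδprod⟩ := hexists
      obtain ⟨hδΦ, hδpos⟩ := hΔmem δ hδΔ
      have hδβ : 0 < ⟪δ, β⟫ := by nlinarith [hc δ hδΔ]
      by_cases hbe : β = δ
      · exact Subgroup.subset_closure ⟨δ, hδΔ, by rw [hbe]⟩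
      · have hβ'pos : 0 < ⟪v, sa δ β⟫ := F5 δ hδΔ β hβΦ hβpos hbe
        have hβ'Φ : sa δ β ∈ Φ := hcl δ hδΦ β hβΦ
        have hlt : ⟪v, sa δ β⟫ < ⟪v, β⟫ := by
          rw [sa_apply δ (hu δ hδΦ), inner_sub_right, real_inner_smul_right]
          nlinarith
        have hsub : Φ.filter (fun γ => ⟪v, γ⟫ < ⟪v, sa δ β⟫)
            ⊂ Φ.filter (fun γ => ⟪v, γ⟫ < ⟪v, β⟫) := by
          refine Finset.ssubset_iff_of_subset (fun γ hγ => ?_) |>.mpr ?_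
          · rw [Finset.mem_filter] at hγ ⊢
            exact ⟨hγ.1, lt_trans hγ.2 hlt⟩
          · exact ⟨sa δ β, Finset.mem_filter.mpr ⟨hβ'Φ, hlt⟩,
              fun hmem => absurd (Finset.mem_filter.mp hmem).2 (lt_irrefl _)⟩
        have hcard' : (Φ.filter (fun γ => ⟪v, γ⟫ < ⟪v, sa δ β⟫)).card < n := by
          have := Finset.card_lt_card hsub
          omega
        have hIH := ih (sa δ β) hβ'Φ hβ'pos hcard'
        have hδcl : sa δ ∈ Subgroup.closure {r : V ≃ₗᵢ[ℝ] V | ∃ δ ∈ Δ, r = sa δ} :=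
          Subgroup.subset_closure ⟨δ, hδΔ, rfl⟩
        have hββ' : β = sa δ (sa δ β) := by
          rw [← isom_mul_apply, sa_mul_self]; rfl
        have hconj : sa β = sa δ * sa (sa δ β) * (sa δ)⁻¹ := by
          conv_lhs => rw [hββ']
          rw [sa_conj (sa δ) (sa δ β) (hu _ hβ'Φ)]
        rw [hconj]
        exact mul_mem (mul_mem hδcl hIH) (inv_mem hδcl)

/-- Any member of the closure of reflections over Δ is a product of a word over Δ. -/
lemma exists_word (Δ : Finset V) :
    ∀ w ∈ Subgroup.closure {r : V ≃ₗᵢ[ℝ] V | ∃ δ ∈ Δ, r = sa δ},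
      ∃ l : List V, (∀ γ ∈ l, γ ∈ Δ) ∧ w = (l.map sa).prod := by
  intro w hw
  induction hw using Subgroup.closure_induction with
  | mem x hx =>
      obtain ⟨δ, hδ, rfl⟩ := hx
      exact ⟨[δ], by simp [hδ], by simp⟩
  | one => exact ⟨[], by simp, by simp⟩
  | mul x y hx hy ihx ihy =>
      obtain ⟨lx, hlx, rfl⟩ := ihx
      obtain ⟨ly, hly, rfl⟩ := ihy
      refine ⟨lx ++ ly, fun γ hγ => ?_, by simp [List.prod_append]⟩
      rcases List.mem_append.mp hγ with h | h
      · exact hlx γ h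
      · exact hly γ h
  | inv x hx ihx =>
      obtain ⟨lx, hlx, rfl⟩ := ihx
      exact ⟨lx.reverse, fun γ hγ => hlx γ (List.mem_reverse.mp hγ),
        by rw [prod_reverse_sa]⟩

/-- Freeness: an element of the reflection group fixing the positive system is trivial. -/
lemma freeness (hu : ∀ α ∈ Φ, ‖α‖ = 1) (hcl : ∀ α ∈ Φ, ∀ β ∈ Φ, sa α β ∈ Φ)
    (hv : ∀ α ∈ Φ, ⟪v, α⟫ ≠ 0) (w : V ≃ₗᵢ[ℝ] V)
    (hw : w ∈ Subgroup.closure {r : V ≃ₗᵢ[ℝ] V | ∃ β ∈ Φ, 0 < ⟪v, β⟫ ∧ r = sa β})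
    (hfix : ∀ α ∈ Φ, 0 < ⟪v, α⟫ → 0 < ⟪v, w α⟫) : w = 1 := by
  obtain ⟨Δ, hΔmem, hNN, F5⟩ := simple_exists Φ v hu hcl hv
  have hle : Subgroup.closure {r : V ≃ₗᵢ[ℝ] V | ∃ β ∈ Φ, 0 < ⟪v, β⟫ ∧ r = sa β}
      ≤ Subgroup.closure {r : V ≃ₗᵢ[ℝ] V | ∃ δ ∈ Δ, r = sa δ} := by
    rw [Subgroup.closure_le]
    rintro r ⟨β, hβΦ, hβpos, rfl⟩
    exact refl_mem_closure Φ v hu hcl hv Δ hΔmem hNN F5 β hβΦ hβpos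
  obtain ⟨l, hlΔ, rfl⟩ := exists_word Δ _ (hle hw)
  exact noword Φ v hu hcl hv Δ (fun δ hδ => (hΔmem δ hδ).1) (fun δ hδ => (hΔmem δ hδ).2) F5
    l.length l (le_refl _) hlΔ hfix

end Core

lemma inner_inv_eq (g : V ≃ₗᵢ[ℝ] V) (x y : V) : ⟪g x, y⟫ = ⟪x, g⁻¹ y⟫ := by
  conv_lhs => rw [show y = g (g⁻¹ y) by simp [← isom_mul_apply]]
  exact g.inner_map_map x _

/-- **Howlett's Lemma.** If `P` is a finite normal subgroup of a group `G` of linear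
isometric automorphisms of `V` that is generated by the reflections it contains, then
`P` has a complement `H` in `G`. -/
theorem howlett_lemma (G P : Subgroup (V ≃ₗᵢ[ℝ] V))
    (hPG : P ≤ G)
    (hPnormal : ∀ g ∈ G, ∀ p ∈ P, g * p * g⁻¹ ∈ P)
    (hPfin : (P : Set (V ≃ₗᵢ[ℝ] V)).Finite)
    (hPgen : P = Subgroup.closure {r : V ≃ₗᵢ[ℝ] V | r ∈ P ∧ IsReflection r}) :
    ∃ H : Subgroup (V ≃ₗᵢ[ℝ] V), H ≤ G ∧ P ⊓ H = ⊥ ∧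
      ∀ g ∈ G, ∃ p ∈ P, ∃ h ∈ H, g = p * h := by
  classical
  -- the set of unit roots of reflections in P
  have hΦfin : ({α : V | ‖α‖ = 1 ∧ sa α ∈ P}).Finite := by
    have hsub : {α : V | ‖α‖ = 1 ∧ sa α ∈ P}
        ⊆ ⋃ p ∈ (P : Set (V ≃ₗᵢ[ℝ] V)), {α | ‖α‖ = 1 ∧ sa α = p} := by
      rintro α ⟨hα1, hα2⟩
      exact Set.mem_biUnion hα2 ⟨hα1, rfl⟩
    refine Set.Finite.subset (Set.Finite.biUnion hPfin (fun p hp => ?_)) hsub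
    by_cases hne : ({α : V | ‖α‖ = 1 ∧ sa α = p}).Nonempty
    · obtain ⟨α₀, hα₀u, hα₀⟩ := hne
      refine Set.Finite.subset ((Set.finite_singleton (-α₀)).insert α₀) ?_
      rintro α ⟨hαu, hα⟩
      have h1 : sa α₀ α = -α := by
        rw [hα₀, ← hα, sa_self α hαu]
      have h2 : α - (2 * ⟪α₀, α⟫) • α₀ = -α := by rw [← sa_apply α₀ hα₀u α, h1]
      have h3' : (2:ℝ) • α = (2 * ⟪α₀, α⟫) • α₀ := by
        linear_combination (norm := module) h2
      have h3 : α = ⟪α₀, α⟫ • α₀ := by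
        have := congrArg (fun x : V => (1/2 : ℝ) • x) h3'
        simpa [smul_smul] using this
      set cα : ℝ := ⟪α₀, α⟫ with hcαdef
      have hc : |cα| = 1 := by
        have h4 : ‖α‖ = |cα| * ‖α₀‖ := by
          rw [h3, norm_smul, Real.norm_eq_abs]
        rw [hαu, hα₀u, mul_one] at h4
        exact h4.symm
      rcases abs_eq (by norm_num : (0:ℝ) ≤ 1) |>.mp hc with h | h
      · left; rw [h3, h, one_smul]
      · right; rw [Set.mem_singleton_iff, h3, h]; module
    · rw [Set.not_nonempty_iff_eq_empty] at hne
      rw [hne]; exact Set.finite_empty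
  set Φ : Finset V := hΦfin.toFinset with hΦdef
  have hΦmem : ∀ α : V, α ∈ Φ ↔ ‖α‖ = 1 ∧ sa α ∈ P := by
    intro α
    rw [hΦdef, Set.Finite.mem_toFinset]
    rfl
  have hu : ∀ α ∈ Φ, ‖α‖ = 1 := fun α hα => ((hΦmem α).mp hα).1
  have hsaP : ∀ α ∈ Φ, sa α ∈ P := fun α hα => ((hΦmem α).mp hα).2
  -- G preserves Φ
  have hGΦ : ∀ g ∈ G, ∀ α ∈ Φ, g α ∈ Φ := by
    intro g hg α hα
    rw [hΦmem]
    refine ⟨by rw [g.norm_map]; exact hu α hα, ?_⟩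
    rw [← sa_conj g α (hu α hα)]
    exact hPnormal g hg _ (hsaP α hα)
  have hcl : ∀ α ∈ Φ, ∀ β ∈ Φ, sa α β ∈ Φ := by
    intro α hα β hβ
    rw [hΦmem]
    refine ⟨by rw [(sa α).norm_map]; exact hu β hβ, ?_⟩
    rw [← sa_conj (sa α) β (hu β hβ)]
    exact mul_mem (mul_mem (hsaP α hα) (hsaP β hβ)) (inv_mem (hsaP α hα))
  -- a generic vector
  obtain ⟨v, hv⟩ : ∃ v : V, ∀ α ∈ Φ, ⟪v, α⟫ ≠ 0 := by
    have htop : ⊤ ∉ Φ.image (fun α => (ℝ ∙ α)ᗮ) := by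
      simp only [Finset.mem_image, not_exists]
      intro α
      rintro ⟨hα, htop⟩
      have hαmem : α ∈ (ℝ ∙ α)ᗮ := htop ▸ Submodule.mem_top
      have : ⟪α, α⟫ = 0 :=
        hαmem α (Submodule.mem_span_singleton_self α)
      have hα1 : ‖α‖ = 1 := hu α hα
      rw [real_inner_self_eq_norm_mul_norm, hα1] at this
      norm_num at this
    have hne := Subspace.biUnion_ne_univ_of_top_notMem htop
    have : ∃ v : V, v ∉ ⋃ p ∈ Φ.image (fun α => (ℝ ∙ α)ᗮ), (p : Set V) := by
      by_contra hcon
      push_neg at hcon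
      exact hne (Set.eq_univ_of_forall hcon)
    obtain ⟨v, hv⟩ := this
    refine ⟨v, fun α hα => ?_⟩
    intro h0
    apply hv
    refine Set.mem_biUnion (Finset.mem_image_of_mem _ hα) ?_
    intro y hy
    rw [Submodule.mem_span_singleton] at hy
    obtain ⟨r, rfl⟩ := hy
    rw [real_inner_smul_left, real_inner_comm, h0, mul_zero]
  -- P is contained in the closure of the root reflections
  have hPle : (P : Subgroup (V ≃ₗᵢ[ℝ] V)) ≤
      Subgroup.closure {r : V ≃ₗᵢ[ℝ] V | ∃ β ∈ Φ, 0 < ⟪v, β⟫ ∧ r = sa β} := by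
    conv_lhs => rw [hPgen]
    apply Subgroup.closure_le _ |>.mpr
    rintro r ⟨hrP, hrRefl⟩
    obtain ⟨u, huu, rfl⟩ := hrRefl.eq_sa
    have huΦ : u ∈ Φ := (hΦmem u).mpr ⟨huu, hrP⟩
    rcases (hv u huΦ).lt_or_gt with hneg | hpos
    · have hmΦ : -u ∈ Φ := by
        have := hcl u huΦ u huΦ
        rwa [sa_self u huu] at this
      refine Subgroup.subset_closure ⟨-u, hmΦ, ?_, (sa_neg u).symm⟩
      rw [inner_neg_right]; linarith
    · exact Subgroup.subset_closure ⟨u, huΦ, hpos, rfl⟩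
  -- inverse stability for the chamber stabilizer
  have hinv : ∀ g : V ≃ₗᵢ[ℝ] V, g ∈ G → (∀ α ∈ Φ, 0 < ⟪v, α⟫ → g α ∈ Φ ∧ 0 < ⟪v, g α⟫) →
      ∀ α ∈ Φ, 0 < ⟪v, α⟫ → g⁻¹ α ∈ Φ ∧ 0 < ⟪v, g⁻¹ α⟫ := by
    intro g hgG hg α hα hαp
    set Pif : Finset V := Φ.filter (fun α => 0 < ⟪v, α⟫) with hPif
    have hmapsto : Pif.image (fun β => g β) ⊆ Pif := by
      intro β hβ
      rw [Finset.mem_image] at hβ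
      obtain ⟨γ, hγ, rfl⟩ := hβ
      rw [Finset.mem_filter] at hγ ⊢
      exact hg γ hγ.1 hγ.2
    have hcardeq : (Pif.image (fun β => g β)).card = Pif.card :=
      Finset.card_image_of_injective _ g.injective
    have himg : Pif.image (fun β => g β) = Pif :=
      Finset.eq_of_subset_of_card_le hmapsto (le_of_eq hcardeq.symm)
    have hαPif : α ∈ Pif := Finset.mem_filter.mpr ⟨hα, hαp⟩
    rw [← himg, Finset.mem_image] at hαPif
    obtain ⟨γ, hγ, hγα⟩ := hαPif
    have : g⁻¹ α = γ := by rw [← hγα]; simp [← isom_mul_apply]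
    rw [this]
    rw [Finset.mem_filter] at hγ
    exact hγ
  -- the complement subgroup H : the stabilizer of the positive system
  set H : Subgroup (V ≃ₗᵢ[ℝ] V) :=
    { carrier := {g | g ∈ G ∧ ∀ α ∈ Φ, 0 < ⟪v, α⟫ → g α ∈ Φ ∧ 0 < ⟪v, g α⟫}
      one_mem' := ⟨one_mem G, fun α hα hp => by
        simpa using ⟨hα, hp⟩⟩
      mul_mem' := by
        rintro a b ⟨haG, ha⟩ ⟨hbG, hb⟩
        refine ⟨mul_mem haG hbG, fun α hα hp => ?_⟩
        obtain ⟨h1, h2⟩ := hb α hα hp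
        have := ha _ h1 h2
        rw [isom_mul_apply]
        exact this
      inv_mem' := by
        rintro g ⟨hgG, hg⟩
        exact ⟨inv_mem hgG, hinv g hgG hg⟩ } with hHdef
  have hHmem : ∀ g : V ≃ₗᵢ[ℝ] V,
      g ∈ H ↔ g ∈ G ∧ ∀ α ∈ Φ, 0 < ⟪v, α⟫ → g α ∈ Φ ∧ 0 < ⟪v, g α⟫ := by
    intro g; rw [hHdef]; rfl
  refine ⟨H, fun g hg => ((hHmem g).mp hg).1, ?_, ?_⟩
  · -- P ⊓ H = ⊥
    rw [Subgroup.eq_bot_iff_forall]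
    intro w hw
    rw [Subgroup.mem_inf] at hw
    exact freeness Φ v hu hcl hv w (hPle hw.1)
      (fun α hα hp => (((hHmem w).mp hw.2).2 α hα hp).2)
  · -- the decomposition G = P * H
    intro g hg
    have hPne : hPfin.toFinset.Nonempty := ⟨1, hPfin.mem_toFinset.mpr (one_mem P)⟩
    obtain ⟨p, hpmem, hpmax⟩ :=
      Finset.exists_max_image hPfin.toFinset (fun p : V ≃ₗᵢ[ℝ] V => ⟪p (g v), v⟫) hPne
    have hpP : p ∈ P := hPfin.mem_toFinset.mp hpmem
    set q : V ≃ₗᵢ[ℝ] V := p * g with hq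
    have hqG : q ∈ G := mul_mem (hPG hpP) hg
    have hqinvG : q⁻¹ ∈ G := inv_mem hqG
    have hqv : ∀ β ∈ Φ, 0 < ⟪v, β⟫ → 0 < ⟪q v, β⟫ := by
      intro β hβ hβp
      by_contra hcon
      push_neg at hcon
      have hne0 : ⟪q v, β⟫ ≠ 0 := by
        rw [inner_inv_eq]
        exact fun h => (hv _ (hGΦ q⁻¹ hqinvG β hβ)) (by rw [real_inner_comm] at h ⊢; exact h)
      have hlt : ⟪q v, β⟫ < 0 := lt_of_le_of_ne hcon hne0
      have hp'P : sa β * p ∈ P := mul_mem (hsaP β hβ) hpP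
      have hval : ⟪(sa β * p) (g v), v⟫ = ⟪q v, v⟫ - 2 * ⟪β, q v⟫ * ⟪β, v⟫ := by
        rw [isom_mul_apply, show p (g v) = q v from rfl, sa_apply β (hu β hβ),
          inner_sub_left, real_inner_smul_left]
      have hmax := hpmax _ (hPfin.mem_toFinset.mpr hp'P)
      rw [hval] at hmax
      have h1 : ⟪β, q v⟫ < 0 := by rw [real_inner_comm]; exact hlt
      have h2 : 0 < ⟪β, v⟫ := by rw [real_inner_comm]; exact hβp
      have h3 : ⟪p (g v), v⟫ = ⟪q v, v⟫ := rfl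
      rw [h3] at hmax
      nlinarith
    have hqinvH : q⁻¹ ∈ H := by
      rw [hHmem]
      refine ⟨hqinvG, fun α hα hαp => ?_⟩
      refine ⟨hGΦ q⁻¹ hqinvG α hα, ?_⟩
      rw [← inner_inv_eq]
      exact hqv α hα hαp
    refine ⟨p⁻¹, inv_mem hpP, q, ?_, ?_⟩
    · have := inv_mem hqinvH
      rwa [inv_inv] at this
    · rw [hq]; group
end

section
/- Every parabolic subgroup of W has a complement in its normalizer: if P = Z_W(X) for some subspace X of V, then there exists a subgroup H of the normalizer N_W(P) such that P ∩ H is trivial and P·H = N_W(P). -/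
set_option linter.unusedSectionVars false
set_option maxHeartbeats 1000000


open scoped RealInnerProductSpace

variable {V : Type*} [NormedAddCommGroup V] [InnerProductSpace ℝ V] [FiniteDimensional ℝ V]

/-- The pointwise stabilizer in `W` of a set `s ⊆ V`. -/
def pointwiseStabilizer (W : Subgroup (V ≃ₗᵢ[ℝ] V)) (s : Set V) : Subgroup (V ≃ₗᵢ[ℝ] V) where
  carrier := {w | w ∈ W ∧ ∀ v ∈ s, w v = v}
  one_mem' := ⟨W.one_mem, fun v _ => rfl⟩
  mul_mem' := fun {a b} ha hb => ⟨W.mul_mem ha.1 hb.1, fun v hv => by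
    have h : (a * b) v = a (b v) := rfl
    rw [h, hb.2 v hv, ha.2 v hv]⟩
  inv_mem' := fun {a} ha => ⟨W.inv_mem ha.1, fun v hv => by
    show a.symm v = v
    conv_lhs => rw [← ha.2 v hv]
    exact a.symm_apply_apply v⟩

noncomputable def sref (α : V) : V ≃ₗᵢ[ℝ] V := Submodule.reflection ((ℝ ∙ α)ᗮ)

theorem sref_apply {α : V} (hα : ‖α‖ = 1) (v : V) : sref α v = v - (2 * ⟪α, v⟫) • α := by
  rw [sref, Submodule.reflection_orthogonal_apply, Submodule.reflection_singleton_apply, hα]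
  push_cast
  rw [one_pow, div_one]
  rw [two_smul, two_mul]
  module

theorem sref_inv (α : V) : (sref α)⁻¹ = sref α := by
  show (sref α).symm = sref α
  exact Submodule.reflection_symm

theorem sref_mul_self (α : V) : sref α * sref α = 1 := by
  rw [← sref_inv α]; exact inv_mul_cancel _

theorem sref_root {α : V} (hα : ‖α‖ = 1) : sref α α = -α := by
  rw [sref_apply hα, real_inner_self_eq_norm_sq, hα]
  module

theorem sref_fix {α : V} (hα : ‖α‖ = 1) {v : V} (h : ⟪α, v⟫ = 0) : sref α v = v := by
  rw [sref_apply hα, h]; simp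

theorem mul_apply' (f g : V ≃ₗᵢ[ℝ] V) (v : V) : (f * g) v = f (g v) := rfl

theorem apply_inv_apply (f : V ≃ₗᵢ[ℝ] V) (v : V) : f (f⁻¹ v) = v := f.apply_symm_apply v

theorem inv_apply_apply (f : V ≃ₗᵢ[ℝ] V) (v : V) : f⁻¹ (f v) = v := f.symm_apply_apply v

theorem inner_map (f : V ≃ₗᵢ[ℝ] V) (u v : V) : ⟪f u, f v⟫ = ⟪u, v⟫ :=
  f.inner_map_map u v

theorem inner_inv_left (f : V ≃ₗᵢ[ℝ] V) (u v : V) : ⟪f⁻¹ u, v⟫ = ⟪u, f v⟫ := by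
  conv_rhs => rw [show u = f (f⁻¹ u) from (f.apply_symm_apply u).symm]
  rw [inner_map]

theorem sref_neg {α : V} (hα : ‖α‖ = 1) : sref (-α) = sref α := by
  ext v
  have h : ‖-α‖ = 1 := by rwa [norm_neg]
  rw [sref_apply h, sref_apply hα, inner_neg_left]
  module

theorem sref_conj {α : V} (hα : ‖α‖ = 1) (g : V ≃ₗᵢ[ℝ] V) :
    g * sref α * g⁻¹ = sref (g α) := by
  ext v
  have hga : ‖g α‖ = 1 := by rw [g.norm_map]; exact hα
  rw [mul_apply', mul_apply', sref_apply hga, sref_apply hα]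
  rw [map_sub, LinearIsometryEquiv.map_smul, apply_inv_apply]
  have h2 : ⟪g α, v⟫ = ⟪α, g⁻¹ v⟫ := by
    conv_lhs => rw [← apply_inv_apply g v]
    rw [inner_map]
  rw [h2]

theorem sref_conj' {α : V} (hα : ‖α‖ = 1) (g : V ≃ₗᵢ[ℝ] V) :
    sref (g α) = g * sref α * g⁻¹ := (sref_conj hα g).symm

theorem isReflection_sref {α : V} (hα : ‖α‖ = 1) : IsReflection (sref α) :=
  ⟨α, by intro h; rw [h, norm_zero] at hα; norm_num at hα, sref_root hα,
    fun v hv => sref_fix hα hv⟩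

theorem IsReflection.eq_sref {r : V ≃ₗᵢ[ℝ] V} (h : IsReflection r) :
    ∃ α : V, ‖α‖ = 1 ∧ r = sref α := by
  obtain ⟨α₀, hα₀, hroot, hfix⟩ := h
  have hn : ‖α₀‖ ≠ 0 := norm_ne_zero_iff.mpr hα₀
  refine ⟨‖α₀‖⁻¹ • α₀, ?_, ?_⟩
  · rw [norm_smul, norm_inv, norm_norm, inv_mul_cancel₀ hn]
  · set α := ‖α₀‖⁻¹ • α₀ with hαdef
    have hα : ‖α‖ = 1 := by rw [hαdef, norm_smul, norm_inv, norm_norm, inv_mul_cancel₀ hn]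
    ext v
    have hdec : v = (v - ⟪α, v⟫ • α) + ⟪α, v⟫ • α := by abel
    have hperp : ⟪α₀, v - ⟪α, v⟫ • α⟫ = 0 := by
      rw [inner_sub_right, real_inner_smul_right, hαdef, real_inner_smul_right,
        real_inner_smul_left, real_inner_self_eq_norm_sq]
      field_simp
      ring
    have hrα : r α = -α := by
      rw [hαdef, LinearIsometryEquiv.map_smul, hroot, smul_neg]
    calc r v = r ((v - ⟪α, v⟫ • α) + ⟪α, v⟫ • α) := by rw [← hdec]
      _ = (v - ⟪α, v⟫ • α) + ⟪α, v⟫ • r α := by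
          rw [map_add, hfix _ hperp, LinearIsometryEquiv.map_smul]
      _ = v - (2 * ⟪α, v⟫) • α := by rw [hrα]; module
      _ = sref α v := (sref_apply hα v).symm

noncomputable instance : DecidableEq V := Classical.decEq V

noncomputable def PosS (Φ : Finset V) (c : V) : Finset V :=
  @Finset.filter _ (fun α => 0 < ⟪α, c⟫) (Classical.decPred _) Φ

theorem mem_PosS {Φ : Finset V} {c : V} {α : V} :
    α ∈ PosS Φ c ↔ α ∈ Φ ∧ 0 < ⟪α, c⟫ := by
  rw [PosS, Finset.mem_filter]

/-! ### Cones and simple systems -/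

def cone (S : Finset V) : Set V :=
  {x | ∃ w : V → ℝ, (∀ y, 0 ≤ w y) ∧ x = ∑ y ∈ S, w y • y}

theorem self_mem_cone {S : Finset V} {x : V} (hx : x ∈ S) : x ∈ cone S := by
  classical
  refine ⟨fun y => if y = x then 1 else 0, fun y => by positivity, ?_⟩
  rw [Finset.sum_eq_single_of_mem x hx]
  · simp
  · intro b _ hb; simp [hb]

theorem cone_erase {S : Finset V} {β : V} (hβ : β ∈ S) (h : β ∈ cone (S.erase β))
    {x : V} (hx : x ∈ cone S) : x ∈ cone (S.erase β) := by
  obtain ⟨u, hu, husum⟩ := h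
  obtain ⟨w, hw, hwsum⟩ := hx
  refine ⟨fun y => w y + w β * u y, fun y => add_nonneg (hw y) (mul_nonneg (hw β) (hu y)), ?_⟩
  have hsplit : ∑ y ∈ S, w y • y = ∑ y ∈ S.erase β, w y • y + w β • β :=
    (Finset.sum_erase_add S _ hβ).symm
  have h2 : w β • β = ∑ y ∈ S.erase β, (w β * u y) • y := by
    set a := w β with ha
    conv_lhs => rw [husum]
    rw [Finset.smul_sum]
    refine Finset.sum_congr rfl fun y _ => ?_
    rw [smul_smul]
  rw [hwsum, hsplit, h2, ← Finset.sum_add_distrib]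
  refine Finset.sum_congr rfl fun y _ => ?_
  rw [add_smul]

theorem exists_simple_system (Φ : Finset V) (c : V) :
    ∃ Δ : Finset V, Δ ⊆ PosS Φ c ∧ (∀ β ∈ PosS Φ c, β ∈ cone Δ) ∧
      (∀ S : Finset V, S ⊆ PosS Φ c → (∀ β ∈ PosS Φ c, β ∈ cone S) → Δ.card ≤ S.card) := by
  classical
  set T := (PosS Φ c).powerset.filter (fun S => ∀ β ∈ PosS Φ c, β ∈ cone S) with hT
  have hTne : T.Nonempty := by
    refine ⟨PosS Φ c, ?_⟩
    rw [hT, Finset.mem_filter, Finset.mem_powerset]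
    exact ⟨subset_rfl, fun β hβ => self_mem_cone hβ⟩
  obtain ⟨Δ, hΔT, hΔmin⟩ := T.exists_min_image Finset.card hTne
  rw [hT, Finset.mem_filter, Finset.mem_powerset] at hΔT
  refine ⟨Δ, hΔT.1, hΔT.2, fun S hS1 hS2 => ?_⟩
  exact hΔmin S (by rw [hT, Finset.mem_filter, Finset.mem_powerset]; exact ⟨hS1, hS2⟩)

section Core

variable {Φ : Finset V} {c : V} {Δ : Finset V}

theorem combo_zero_nonneg (hΔ1 : Δ ⊆ PosS Φ c) {w : V → ℝ} (hw : ∀ y, 0 ≤ w y)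
    (hsum : ∑ δ ∈ Δ, w δ • δ = 0) : ∀ δ ∈ Δ, w δ = 0 := by
  have h0 : ∑ δ ∈ Δ, w δ * ⟪δ, c⟫ = 0 := by
    have := congrArg (fun x : V => ⟪x, c⟫) hsum
    simpa [sum_inner, real_inner_smul_left] using this
  have hnn : ∀ δ ∈ Δ, 0 ≤ w δ * ⟪δ, c⟫ := fun δ hδ =>
    mul_nonneg (hw δ) (le_of_lt (mem_PosS.mp (hΔ1 hδ)).2)
  intro δ hδ
  have := (Finset.sum_eq_zero_iff_of_nonneg hnn).mp h0 δ hδ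
  have hpos := (mem_PosS.mp (hΔ1 hδ)).2
  have : w δ * ⟪δ, c⟫ = 0 := this
  rcases mul_eq_zero.mp this with h | h
  · exact h
  · exact absurd h (ne_of_gt hpos)

theorem mem_cone_of_smul {β : V} {r : ℝ} (hr : 0 < r) {w : V → ℝ} (hw : ∀ y, 0 ≤ w y)
    (h : r • β = ∑ y ∈ Δ.erase β, w y • y) : β ∈ cone (Δ.erase β) := by
  have h2 : r⁻¹ • (r • β) = r⁻¹ • ∑ y ∈ Δ.erase β, w y • y := congrArg _ h
  rw [smul_smul, inv_mul_cancel₀ (ne_of_gt hr), one_smul, Finset.smul_sum] at h2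
  refine ⟨fun y => r⁻¹ * w y, fun y => mul_nonneg (by positivity) (hw y), ?_⟩
  refine h2.trans (Finset.sum_congr rfl fun y _ => (smul_smul _ _ _))

theorem erase_contra (hΔ1 : Δ ⊆ PosS Φ c) (hΔ2 : ∀ β ∈ PosS Φ c, β ∈ cone Δ)
    (hΔ3 : ∀ S : Finset V, S ⊆ PosS Φ c → (∀ β ∈ PosS Φ c, β ∈ cone S) → Δ.card ≤ S.card)
    {β : V} (hβ : β ∈ Δ) (h : β ∈ cone (Δ.erase β)) : False := by
  have hall : ∀ γ ∈ PosS Φ c, γ ∈ cone (Δ.erase β) :=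
    fun γ hγ => cone_erase hβ h (hΔ2 γ hγ)
  have hcard := hΔ3 (Δ.erase β) ((Finset.erase_subset _ _).trans hΔ1) hall
  rw [Finset.card_erase_of_mem hβ] at hcard
  have hpos : 0 < Δ.card := Finset.card_pos.mpr ⟨β, hβ⟩
  omega

theorem sum_ind {α : V} (hα : α ∈ Δ) (w : V → ℝ) (t : ℝ) :
    ∑ y ∈ Δ, (w y + if y = α then t else 0) • y = (∑ y ∈ Δ, w y • y) + t • α := by
  have h1 : ∀ y ∈ Δ, (w y + if y = α then t else 0) • y
      = w y • y + (if y = α then t else 0) • y := fun y _ => add_smul _ _ _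
  rw [Finset.sum_congr rfl h1, Finset.sum_add_distrib]
  congr 1
  rw [Finset.sum_eq_single_of_mem α hα (fun b _ hb => by simp [hb])]
  simp

theorem sum_sub_ind {α : V} (hα : α ∈ Δ) (w : V → ℝ) (t : ℝ) :
    ∑ y ∈ Δ, (if y = α then w y - t else w y) • y = (∑ y ∈ Δ, w y • y) - t • α := by
  have h1 : ∀ y ∈ Δ, (if y = α then w y - t else w y) • y
      = w y • y - (if y = α then t else 0) • y := by
    intro y _
    split_ifs with h
    · rw [sub_smul]
    · simp
  rw [Finset.sum_congr rfl h1, Finset.sum_sub_distrib]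
  congr 1
  rw [Finset.sum_eq_single_of_mem α hα (fun b _ hb => by simp [hb])]
  simp

theorem split_off {x v : V} (hx : x ∈ Δ) {w : V → ℝ}
    (h : v = ∑ y ∈ Δ, w y • y) : v = (∑ y ∈ Δ.erase x, w y • y) + w x • x := by
  rw [h, Finset.sum_erase_add]
  exact hx

theorem neg_mem_Phi (hu : ∀ α ∈ Φ, ‖α‖ = 1) (hcl : ∀ α ∈ Φ, ∀ β ∈ Φ, sref α β ∈ Φ)
    {β : V} (hβ : β ∈ Φ) : -β ∈ Φ := by
  have := hcl β hβ β hβ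
  rwa [sref_root (hu β hβ)] at this

theorem obtuse (hΔ1 : Δ ⊆ PosS Φ c) (hΔ2 : ∀ β ∈ PosS Φ c, β ∈ cone Δ)
    (hΔ3 : ∀ S : Finset V, S ⊆ PosS Φ c → (∀ β ∈ PosS Φ c, β ∈ cone S) → Δ.card ≤ S.card)
    (hu : ∀ α ∈ Φ, ‖α‖ = 1) (hcl : ∀ α ∈ Φ, ∀ β ∈ Φ, sref α β ∈ Φ)
    (hc : ∀ α ∈ Φ, ⟪α, c⟫ ≠ 0)
    {α β : V} (hα : α ∈ Δ) (hβ : β ∈ Δ) (hne : α ≠ β) : ⟪α, β⟫ ≤ 0 := by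
  by_contra hpos
  push_neg at hpos
  set t := ⟪α, β⟫ with ht
  have hαP := mem_PosS.mp (hΔ1 hα)
  have hβP := mem_PosS.mp (hΔ1 hβ)
  have hαΦ : α ∈ Φ := hαP.1
  have hβΦ : β ∈ Φ := hβP.1
  have hγΦ : sref α β ∈ Φ := hcl α hαΦ β hβΦ
  have hγeq : sref α β = β - (2 * t) • α := sref_apply (hu α hαΦ) β
  rcases (hc _ hγΦ).lt_or_gt with hneg | hposγ
  · -- sref α β is negative; -(sref α β) = (2t)•α - β ∈ Pos
    have hnegΦ : -(sref α β) ∈ Φ := neg_mem_Phi hu hcl hγΦ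
    have hnegP : -(sref α β) ∈ PosS Φ c := mem_PosS.mpr ⟨hnegΦ, by rwa [inner_neg_left, neg_pos]⟩
    obtain ⟨w, hw, hwsum⟩ := hΔ2 _ hnegP
    have hkey : (2 * t) • α = ∑ y ∈ Δ, (w y + if y = β then 1 else 0) • y := by
      rw [sum_ind hβ w 1, ← hwsum, one_smul, hγeq]
      abel
    set w' : V → ℝ := fun y => w y + if y = β then 1 else 0 with hw'
    have hw'nn : ∀ y, 0 ≤ w' y := fun y => add_nonneg (hw y) (by positivity)
    rcases le_or_gt (2 * t) (w' α) with hge | hlt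
    · -- subtract: nonneg combination equal to zero
      have hzero : ∑ y ∈ Δ, (if y = α then w' y - 2 * t else w' y) • y = 0 := by
        rw [sum_sub_ind hα w' (2 * t), ← hkey]
        abel
      have hall := combo_zero_nonneg hΔ1 (w := fun y => if y = α then w' y - 2 * t else w' y)
        (fun y => by
          split_ifs with h
          · subst h; linarith
          · exact hw'nn y) hzero
      have hβ0 := hall β hβ
      rw [if_neg (Ne.symm hne)] at hβ0
      have : w' β = w β + 1 := by rw [hw']; simp
      rw [this] at hβ0
      have := hw β
      linarith
    · -- α is in the cone of Δ.erase α
      have hsplit : (2 * t) • α = (∑ y ∈ Δ.erase α, w' y • y) + w' α • α := split_off hα hkey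
      have : (2 * t - w' α) • α = ∑ y ∈ Δ.erase α, w' y • y := by
        rw [sub_smul]
        exact sub_eq_of_eq_add hsplit
      exact erase_contra hΔ1 hΔ2 hΔ3 hα (mem_cone_of_smul (by linarith) hw'nn this)
  · -- sref α β ∈ Pos; β = (sref α β) + (2t)•α
    have hγP : sref α β ∈ PosS Φ c := mem_PosS.mpr ⟨hγΦ, hposγ⟩
    obtain ⟨w, hw, hwsum⟩ := hΔ2 _ hγP
    have hkey : β = ∑ y ∈ Δ, (w y + if y = α then 2 * t else 0) • y := by
      rw [sum_ind hα w (2 * t), ← hwsum, hγeq]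
      abel
    set w' : V → ℝ := fun y => w y + if y = α then 2 * t else 0 with hw'
    have hw'nn : ∀ y, 0 ≤ w' y := fun y => add_nonneg (hw y) (by positivity)
    rcases le_or_gt 1 (w' β) with hge | hlt
    · have hzero : ∑ y ∈ Δ, (if y = β then w' y - 1 else w' y) • y = 0 := by
        rw [sum_sub_ind hβ w' 1, ← hkey, one_smul]
        abel
      have hall := combo_zero_nonneg hΔ1 (w := fun y => if y = β then w' y - 1 else w' y)
        (fun y => by
          split_ifs with h
          · subst h; linarith
          · exact hw'nn y) hzero
      have hα0 := hall α hα
      rw [if_neg hne] at hα0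
      have : w' α = w α + 2 * t := by rw [hw']; simp
      rw [this] at hα0
      have := hw α
      linarith
    · have hsplit : β = (∑ y ∈ Δ.erase β, w' y • y) + w' β • β := split_off hβ hkey
      have : (1 - w' β) • β = ∑ y ∈ Δ.erase β, w' y • y := by
        rw [sub_smul, one_smul]
        exact sub_eq_of_eq_add hsplit
      exact erase_contra hΔ1 hΔ2 hΔ3 hβ (mem_cone_of_smul (by linarith) hw'nn this)

end Core

section Core2

variable {Φ : Finset V} {c : V} {Δ : Finset V}

theorem combo_nonpos (hΔ1 : Δ ⊆ PosS Φ c) (hΔ2 : ∀ β ∈ PosS Φ c, β ∈ cone Δ)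
    (hΔ3 : ∀ S : Finset V, S ⊆ PosS Φ c → (∀ β ∈ PosS Φ c, β ∈ cone S) → Δ.card ≤ S.card)
    (hu : ∀ α ∈ Φ, ‖α‖ = 1) (hcl : ∀ α ∈ Φ, ∀ β ∈ Φ, sref α β ∈ Φ)
    (hc : ∀ α ∈ Φ, ⟪α, c⟫ ≠ 0)
    {lam : V → ℝ} (hsum : ∑ δ ∈ Δ, lam δ • δ = 0) : ∀ δ ∈ Δ, lam δ ≤ 0 := by
  set A := Δ.filter (fun δ => 0 < lam δ) with hA
  set C := Δ.filter (fun δ => ¬ 0 < lam δ) with hC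
  have hveq : (∑ δ ∈ A, lam δ • δ : V) = ∑ ε ∈ C, (-lam ε) • ε := by
    have hsplit : (∑ δ ∈ A, lam δ • δ) + ∑ δ ∈ C, lam δ • δ = ∑ δ ∈ Δ, lam δ • δ :=
      Finset.sum_filter_add_sum_filter_not Δ _ _
    have h1 : (∑ δ ∈ A, lam δ • δ : V) = -(∑ δ ∈ C, lam δ • δ) :=
      eq_neg_of_add_eq_zero_left (hsplit.trans hsum)
    rw [h1, ← Finset.sum_neg_distrib]
    exact Finset.sum_congr rfl fun ε _ => (neg_smul _ _).symm
  have key : ⟪(∑ δ ∈ A, lam δ • δ : V), ∑ ε ∈ C, (-lam ε) • ε⟫ ≤ 0 := by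
    rw [sum_inner]
    apply Finset.sum_nonpos
    intro δ hδ
    rw [real_inner_smul_left, inner_sum]
    have hδA := Finset.mem_filter.mp hδ
    apply mul_nonpos_of_nonneg_of_nonpos (le_of_lt hδA.2)
    apply Finset.sum_nonpos
    intro ε hε
    have hεC := Finset.mem_filter.mp hε
    rw [real_inner_smul_right]
    apply mul_nonpos_of_nonneg_of_nonpos (by simpa using not_lt.mp hεC.2)
    apply obtuse hΔ1 hΔ2 hΔ3 hu hcl hc hδA.1 hεC.1
    intro hde
    rw [hde] at hδA
    exact hεC.2 hδA.2
  have hv0 : (∑ δ ∈ A, lam δ • δ : V) = 0 := by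
    rw [← real_inner_self_nonpos]
    nth_rewrite 2 [hveq]
    exact key
  have hAempty : A = ∅ := by
    by_contra hne
    have hAne : A.Nonempty := Finset.nonempty_iff_ne_empty.mpr hne
    have hcpos : 0 < ∑ δ ∈ A, lam δ * ⟪δ, c⟫ := by
      apply Finset.sum_pos _ hAne
      intro δ hδ
      have hδA := Finset.mem_filter.mp hδ
      exact mul_pos hδA.2 (mem_PosS.mp (hΔ1 hδA.1)).2
    have : ∑ δ ∈ A, lam δ * ⟪δ, c⟫ = 0 := by
      have := congrArg (fun x : V => ⟪x, c⟫) hv0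
      simpa [sum_inner, real_inner_smul_left] using this
    linarith
  intro δ hδ
  by_contra h
  push_neg at h
  have : δ ∈ A := Finset.mem_filter.mpr ⟨hδ, h⟩
  rw [hAempty] at this
  exact absurd this (Finset.notMem_empty δ)

theorem combo_zero (hΔ1 : Δ ⊆ PosS Φ c) (hΔ2 : ∀ β ∈ PosS Φ c, β ∈ cone Δ)
    (hΔ3 : ∀ S : Finset V, S ⊆ PosS Φ c → (∀ β ∈ PosS Φ c, β ∈ cone S) → Δ.card ≤ S.card)
    (hu : ∀ α ∈ Φ, ‖α‖ = 1) (hcl : ∀ α ∈ Φ, ∀ β ∈ Φ, sref α β ∈ Φ)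
    (hc : ∀ α ∈ Φ, ⟪α, c⟫ ≠ 0)
    {lam : V → ℝ} (hsum : ∑ δ ∈ Δ, lam δ • δ = 0) : ∀ δ ∈ Δ, lam δ = 0 := by
  intro δ hδ
  have h1 := combo_nonpos hΔ1 hΔ2 hΔ3 hu hcl hc hsum δ hδ
  have hsum2 : ∑ δ ∈ Δ, (-lam δ) • δ = 0 := by
    have : ∑ δ ∈ Δ, (-lam δ) • δ = -∑ δ ∈ Δ, lam δ • δ := by
      rw [← Finset.sum_neg_distrib]
      exact Finset.sum_congr rfl fun ε _ => (neg_smul _ _)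
    rw [this, hsum, neg_zero]
  have h2 := combo_nonpos hΔ1 hΔ2 hΔ3 hu hcl hc hsum2 δ hδ
  simp at h2
  linarith

end Core2

section Core3

variable {Φ : Finset V} {c : V} {Δ : Finset V}

theorem key_reflect_pos (hΔ1 : Δ ⊆ PosS Φ c) (hΔ2 : ∀ β ∈ PosS Φ c, β ∈ cone Δ)
    (hΔ3 : ∀ S : Finset V, S ⊆ PosS Φ c → (∀ β ∈ PosS Φ c, β ∈ cone S) → Δ.card ≤ S.card)
    (hu : ∀ α ∈ Φ, ‖α‖ = 1) (hcl : ∀ α ∈ Φ, ∀ β ∈ Φ, sref α β ∈ Φ)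
    (hc : ∀ α ∈ Φ, ⟪α, c⟫ ≠ 0)
    {α β : V} (hα : α ∈ Δ) (hβ : β ∈ PosS Φ c) (hne : β ≠ α) :
    sref α β ∈ PosS Φ c := by
  obtain ⟨hβΦ, hβc⟩ := mem_PosS.mp hβ
  have hαP := mem_PosS.mp (hΔ1 hα)
  have hαΦ : α ∈ Φ := hαP.1
  obtain ⟨w, hw, hwsum⟩ := hΔ2 β hβ
  have hex : ∃ δ ∈ Δ, δ ≠ α ∧ 0 < w δ := by
    by_contra hno
    push_neg at hno
    have hz : ∀ δ ∈ Δ, δ ≠ α → w δ = 0 := fun δ hδ hδα =>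
      le_antisymm (hno δ hδ hδα) (hw δ)
    have hβα : β = w α • α := by
      rw [hwsum, Finset.sum_eq_single_of_mem α hα]
      intro b hb hbα
      rw [hz b hb hbα, zero_smul]
    have hn : (1 : ℝ) = |w α| := by
      have h1 := hu β hβΦ
      rw [hβα, norm_smul, hu α hαΦ, mul_one] at h1
      exact h1.symm
    have hwα : w α = 1 := by
      rcases abs_cases (w α) with ⟨h, _⟩ | ⟨h, _⟩
      · linarith
      · nlinarith [hw α]
    rw [hwα, one_smul] at hβα
    exact hne hβα
  obtain ⟨δ₀, hδ₀Δ, hδ₀ne, hδ₀pos⟩ := hex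
  have hγΦ : sref α β ∈ Φ := hcl α hαΦ β hβΦ
  by_contra hγnot
  have hγneg : ⟪sref α β, c⟫ < 0 := by
    rcases (hc _ hγΦ).lt_or_gt with h | h
    · exact h
    · exact absurd (mem_PosS.mpr ⟨hγΦ, h⟩) hγnot
  have hnegΦ : -(sref α β) ∈ Φ := neg_mem_Phi hu hcl hγΦ
  have hnegP : -(sref α β) ∈ PosS Φ c :=
    mem_PosS.mpr ⟨hnegΦ, by rwa [inner_neg_left, neg_pos]⟩
  obtain ⟨u, hu', husum⟩ := hΔ2 _ hnegP
  set t := ⟪α, β⟫ with ht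
  have hγeq : sref α β = β - (2 * t) • α := sref_apply (hu α hαΦ) β
  have hzero : ∑ y ∈ Δ, (w y + u y - if y = α then 2 * t else 0) • y = 0 := by
    have h1 : ∀ y ∈ Δ, (w y + u y - if y = α then 2 * t else 0) • y
        = (w y • y + u y • y) - (if y = α then 2 * t else 0) • y := by
      intro y _
      rw [sub_smul, add_smul]
    rw [Finset.sum_congr rfl h1, Finset.sum_sub_distrib, Finset.sum_add_distrib]
    have h2 : ∑ y ∈ Δ, (if y = α then 2 * t else 0) • y = (2 * t) • α := by
      rw [Finset.sum_eq_single_of_mem α hα (fun b _ hb => by simp [hb])]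
      simp
    rw [h2, ← hwsum, ← husum, hγeq]
    abel
  have hall := combo_zero hΔ1 hΔ2 hΔ3 hu hcl hc hzero δ₀ hδ₀Δ
  rw [if_neg hδ₀ne] at hall
  have := hu' δ₀
  linarith

end Core3

noncomputable def wprod (l : List V) : V ≃ₗᵢ[ℝ] V := (l.map sref).prod

theorem wprod_nil : wprod ([] : List V) = 1 := rfl

theorem wprod_cons (δ : V) (l : List V) : wprod (δ :: l) = sref δ * wprod l := by
  simp [wprod]

theorem wprod_singleton (δ : V) : wprod [δ] = sref δ := by
  simp [wprod]

theorem wprod_append (l₁ l₂ : List V) : wprod (l₁ ++ l₂) = wprod l₁ * wprod l₂ := by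
  simp [wprod]

section Core4

variable {Φ : Finset V} {c : V} {Δ : Finset V}

theorem wprod_mem (hcl : ∀ α ∈ Φ, ∀ β ∈ Φ, sref α β ∈ Φ)
    {l : List V} (hl : ∀ δ ∈ l, δ ∈ Φ) {v : V} (hv : v ∈ Φ) : wprod l v ∈ Φ := by
  induction l with
  | nil => simpa [wprod_nil]
  | cons δ l ih =>
    rw [wprod_cons, mul_apply']
    exact hcl δ (hl δ List.mem_cons_self) _ (ih fun x hx => hl x (List.mem_cons_of_mem δ hx))

theorem sref_mem_G0 (hΔ1 : Δ ⊆ PosS Φ c) (hΔ2 : ∀ β ∈ PosS Φ c, β ∈ cone Δ)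
    (hΔ3 : ∀ S : Finset V, S ⊆ PosS Φ c → (∀ β ∈ PosS Φ c, β ∈ cone S) → Δ.card ≤ S.card)
    (hu : ∀ α ∈ Φ, ‖α‖ = 1) (hcl : ∀ α ∈ Φ, ∀ β ∈ Φ, sref α β ∈ Φ)
    (hc : ∀ α ∈ Φ, ⟪α, c⟫ ≠ 0) :
    ∀ β ∈ Φ, sref β ∈ Subgroup.closure {g : V ≃ₗᵢ[ℝ] V | ∃ δ ∈ Δ, g = sref δ} := by
  set G0 := Subgroup.closure {g : V ≃ₗᵢ[ℝ] V | ∃ δ ∈ Δ, g = sref δ} with hG0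
  have main : ∀ k : ℕ, ∀ β ∈ PosS Φ c,
      ((PosS Φ c).filter (fun γ => ⟪γ, c⟫ < ⟪β, c⟫)).card = k → sref β ∈ G0 := by
    intro k
    induction k using Nat.strong_induction_on with
    | _ k ih =>
      intro β hβ hk
      by_cases hβΔ : β ∈ Δ
      · exact Subgroup.subset_closure ⟨β, hβΔ, rfl⟩
      obtain ⟨hβΦ, hβc⟩ := mem_PosS.mp hβ
      obtain ⟨w, hw, hwsum⟩ := hΔ2 β hβ
      have hsum1 : ∑ δ ∈ Δ, w δ * ⟪δ, β⟫ = 1 := by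
        have h1 : ⟪β, β⟫ = 1 := by
          rw [real_inner_self_eq_norm_sq, hu β hβΦ]
          norm_num
        have h2 := congrArg (fun x : V => ⟪x, β⟫) (hwsum.symm)
        simpa [sum_inner, real_inner_smul_left, h1, hu β hβΦ] using h2
      have hex : ∃ δ ∈ Δ, 0 < w δ * ⟪δ, β⟫ := by
        by_contra h
        push_neg at h
        have := Finset.sum_nonpos h
        rw [hsum1] at this
        linarith
      obtain ⟨δ, hδΔ, hδpos⟩ := hex
      have hδΦ : δ ∈ Φ := (mem_PosS.mp (hΔ1 hδΔ)).1
      have hδc : 0 < ⟪δ, c⟫ := (mem_PosS.mp (hΔ1 hδΔ)).2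
      have hip : 0 < ⟪δ, β⟫ := by
        rcases mul_pos_iff.mp hδpos with ⟨_, h⟩ | ⟨h, _⟩
        · exact h
        · exact absurd (hw δ) (not_le.mpr h)
      have hβδ : β ≠ δ := fun h => hβΔ (h ▸ hδΔ)
      have hγP : sref δ β ∈ PosS Φ c := key_reflect_pos hΔ1 hΔ2 hΔ3 hu hcl hc hδΔ hβ hβδ
      have hγΦ : sref δ β ∈ Φ := (mem_PosS.mp hγP).1
      have hγc : ⟪sref δ β, c⟫ < ⟪β, c⟫ := by
        rw [sref_apply (hu δ hδΦ), inner_sub_left, real_inner_smul_left]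
        nlinarith
      have hmlt : ((PosS Φ c).filter (fun γ => ⟪γ, c⟫ < ⟪sref δ β, c⟫)).card < k := by
        rw [← hk]
        apply Finset.card_lt_card
        rw [Finset.ssubset_iff_of_subset]
        · exact ⟨sref δ β, Finset.mem_filter.mpr ⟨hγP, hγc⟩,
            fun hmem => absurd (Finset.mem_filter.mp hmem).2 (lt_irrefl _)⟩
        · intro γ hγ
          obtain ⟨h1, h2⟩ := Finset.mem_filter.mp hγ
          exact Finset.mem_filter.mpr ⟨h1, h2.trans hγc⟩
      have hγG := ih _ hmlt (sref δ β) hγP rfl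
      have hδG : sref δ ∈ G0 := Subgroup.subset_closure ⟨δ, hδΔ, rfl⟩
      have hinv : sref δ (sref δ β) = β := by
        rw [← mul_apply', sref_mul_self]
        rfl
      have hconj : sref β = sref δ * sref (sref δ β) * sref δ := by
        conv_lhs => rw [← hinv]
        rw [sref_conj' (hu _ hγΦ) (sref δ), sref_inv]
      rw [hconj]
      exact mul_mem (mul_mem hδG hγG) hδG
  intro β hβΦ
  rcases (hc β hβΦ).lt_or_gt with hneg | hpos
  · have hnegΦ : -β ∈ Φ := neg_mem_Phi hu hcl hβΦ
    have hnegP : -β ∈ PosS Φ c := mem_PosS.mpr ⟨hnegΦ, by rwa [inner_neg_left, neg_pos]⟩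
    have := main _ _ hnegP rfl
    rwa [sref_neg (hu β hβΦ)] at this
  · exact main _ _ (mem_PosS.mpr ⟨hβΦ, hpos⟩) rfl

end Core4

section Core5

variable {Φ : Finset V} {c : V} {Δ : Finset V}

theorem last_letter_neg (hΔ1 : Δ ⊆ PosS Φ c) (hΔ2 : ∀ β ∈ PosS Φ c, β ∈ cone Δ)
    (hΔ3 : ∀ S : Finset V, S ⊆ PosS Φ c → (∀ β ∈ PosS Φ c, β ∈ cone S) → Δ.card ≤ S.card)
    (hu : ∀ α ∈ Φ, ‖α‖ = 1) (hcl : ∀ α ∈ Φ, ∀ β ∈ Φ, sref α β ∈ Φ)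
    (hc : ∀ α ∈ Φ, ⟪α, c⟫ ≠ 0)
    {l : List V} {α : V} (hl : ∀ δ ∈ l, δ ∈ Δ) (hα : α ∈ Δ)
    (hmin : ∀ l₂ : List V, (∀ δ ∈ l₂, δ ∈ Δ) →
      wprod l₂ = wprod (l ++ [α]) → l.length + 1 ≤ l₂.length) :
    ⟪wprod (l ++ [α]) α, c⟫ < 0 := by
  classical
  have hΔΦ : ∀ δ ∈ Δ, δ ∈ Φ := fun δ hδ => (mem_PosS.mp (hΔ1 hδ)).1
  have hlΦ : ∀ δ ∈ l, δ ∈ Φ := fun δ hδ => hΔΦ δ (hl δ hδ)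
  have hαΦ : α ∈ Φ := hΔΦ α hα
  have hαc : 0 < ⟪α, c⟫ := (mem_PosS.mp (hΔ1 hα)).2
  set m := l.length with hm
  -- the vectors t j = wprod (l.drop j) α
  have htΦ : ∀ j, wprod (l.drop j) α ∈ Φ := fun j =>
    wprod_mem hcl (fun δ hδ => hlΦ δ (List.mem_of_mem_drop hδ)) hαΦ
  by_contra hge
  have hwα : wprod (l ++ [α]) α = -(wprod (l.drop 0) α) := by
    rw [wprod_append, wprod_singleton, mul_apply', sref_root (hu α hαΦ), map_neg,
      List.drop_zero]
  have hwαΦ : wprod (l ++ [α]) α ∈ Φ := by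
    rw [hwα]
    exact neg_mem_Phi hu hcl (htΦ 0)
  have hwαpos : 0 < ⟪wprod (l ++ [α]) α, c⟫ := lt_of_le_of_ne (not_lt.mp hge) (Ne.symm (hc _ hwαΦ))
  have ht0neg : ⟪wprod (l.drop 0) α, c⟫ < 0 := by
    have : ⟪wprod (l ++ [α]) α, c⟫ = -⟪wprod (l.drop 0) α, c⟫ := by
      rw [hwα, inner_neg_left]
    linarith [this ▸ hwαpos]
  set P : ℕ → Prop := fun j => 0 < ⟪wprod (l.drop j) α, c⟫ with hP
  have hPm : P m := by
    rw [hP]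
    simp only [hm, List.drop_length, wprod_nil]
    exact hαc
  have hex : ∃ j, P j := ⟨m, hPm⟩
  set j := Nat.find hex with hj
  have hjP : P j := Nat.find_spec hex
  have hjmin : ∀ i < j, ¬ P i := fun i hi => Nat.find_min hex hi
  have hj0 : j ≠ 0 := by
    intro h
    exact (h ▸ hjP).not_gt (by simpa using ht0neg)
  have hjm : j ≤ m := Nat.find_min' hex hPm
  have hm1 : 1 ≤ m := le_trans (Nat.one_le_iff_ne_zero.mpr hj0) hjm
  have hj1m : j - 1 < m := by omega
  set δ : V := l.get ⟨j - 1, by omega⟩ with hδ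
  have hδΔ : δ ∈ Δ := hl δ (List.get_mem l _)
  have hdrop : l.drop (j - 1) = δ :: l.drop j := by
    have h1 := List.drop_eq_getElem_cons (l := l) (i := j - 1) (by omega)
    rw [show j - 1 + 1 = j by omega] at h1
    rw [h1]
    rfl
  have ht' : wprod (l.drop (j - 1)) α = sref δ (wprod (l.drop j) α) := by
    rw [hdrop, wprod_cons, mul_apply']
  have htjpos : wprod (l.drop j) α ∈ PosS Φ c := mem_PosS.mpr ⟨htΦ j, hjP⟩
  have htj1neg : ⟪sref δ (wprod (l.drop j) α), c⟫ < 0 := by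
    have hne0 := hc _ (htΦ (j - 1))
    have := hjmin (j - 1) (by omega)
    rw [hP] at this
    push_neg at this
    rw [← ht']
    exact lt_of_le_of_ne this (hc _ (htΦ (j - 1)))
  have htjδ : wprod (l.drop j) α = δ := by
    by_contra hne
    have := key_reflect_pos hΔ1 hΔ2 hΔ3 hu hcl hc hδΔ htjpos hne
    exact absurd (mem_PosS.mp this).2 (not_lt.mpr (le_of_lt htj1neg))
  have hsrefδ : sref δ = wprod (l.drop j) * sref α * (wprod (l.drop j))⁻¹ := by
    conv_lhs => rw [← htjδ]
    exact sref_conj' (hu α hαΦ) _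
  have hswap : sref δ * wprod (l.drop j) = wprod (l.drop j) * sref α := by
    rw [hsrefδ]
    group
  -- the shorter word
  set l₂ : List V := l.take (j - 1) ++ l.drop j with hl₂
  have hl₂Δ : ∀ x ∈ l₂, x ∈ Δ := by
    intro x hx
    rcases List.mem_append.mp hx with h | h
    · exact hl x (List.take_subset _ _ h)
    · exact hl x (List.drop_subset _ _ h)
  have hprod : wprod l₂ = wprod (l ++ [α]) := by
    rw [hl₂, wprod_append, wprod_append, wprod_singleton]
    conv_rhs => rw [show l = l.take (j - 1) ++ l.drop (j - 1) from (List.take_append_drop _ l).symm]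
    rw [wprod_append, hdrop, wprod_cons]
    rw [hswap, mul_assoc, mul_assoc, sref_mul_self, mul_one]
  have hlen := hmin l₂ hl₂Δ hprod
  rw [hl₂] at hlen
  rw [List.length_append, List.length_take, List.length_drop] at hlen
  have : min (j - 1) m = j - 1 := by omega
  rw [this] at hlen
  omega

end Core5

theorem wprod_reverse (l : List V) : wprod l.reverse = (wprod l)⁻¹ := by
  induction l with
  | nil => simp [wprod_nil]
  | cons δ l ih =>
    rw [List.reverse_cons, wprod_append, wprod_singleton, ih, wprod_cons, mul_inv_rev, sref_inv]

theorem core_trivial_stab (Φ : Finset V) (c : V)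
    (hu : ∀ α ∈ Φ, ‖α‖ = 1) (hcl : ∀ α ∈ Φ, ∀ β ∈ Φ, sref α β ∈ Φ)
    (hc : ∀ α ∈ Φ, ⟪α, c⟫ ≠ 0) :
    ∀ g ∈ Subgroup.closure {r : V ≃ₗᵢ[ℝ] V | ∃ α ∈ Φ, r = sref α},
      (∀ α ∈ Φ, 0 < ⟪α, c⟫ * ⟪α, g c⟫) → g = 1 := by
  classical
  obtain ⟨Δ, hΔ1, hΔ2, hΔ3⟩ := exists_simple_system Φ c
  intro g hg hcham
  set G0 := Subgroup.closure {r : V ≃ₗᵢ[ℝ] V | ∃ δ ∈ Δ, r = sref δ} with hG0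
  have hle : Subgroup.closure {r : V ≃ₗᵢ[ℝ] V | ∃ α ∈ Φ, r = sref α} ≤ G0 := by
    rw [Subgroup.closure_le]
    rintro r ⟨α, hα, rfl⟩
    exact sref_mem_G0 hΔ1 hΔ2 hΔ3 hu hcl hc α hα
  have hgG0 : g⁻¹ ∈ G0 := inv_mem (hle hg)
  have rep : ∀ x ∈ G0, ∃ l : List V, (∀ δ ∈ l, δ ∈ Δ) ∧ wprod l = x := by
    intro x hx
    induction hx using Subgroup.closure_induction with
    | mem x hx =>
      obtain ⟨δ, hδ, rfl⟩ := hx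
      exact ⟨[δ], by simpa using hδ, wprod_singleton δ⟩
    | one => exact ⟨[], by simp, wprod_nil⟩
    | mul x y _ _ ihx ihy =>
      obtain ⟨lx, hlx, hx'⟩ := ihx
      obtain ⟨ly, hly, hy'⟩ := ihy
      refine ⟨lx ++ ly, ?_, by rw [wprod_append, hx', hy']⟩
      intro δ hδ
      rcases List.mem_append.mp hδ with h | h
      · exact hlx δ h
      · exact hly δ h
    | inv x _ ihx =>
      obtain ⟨lx, hlx, hx'⟩ := ihx
      exact ⟨lx.reverse, fun δ hδ => hlx δ (List.mem_reverse.mp hδ),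
        by rw [wprod_reverse, hx']⟩
  by_contra hgne
  have hune : g⁻¹ ≠ 1 := fun h => hgne (by rwa [inv_eq_one] at h)
  have hexlen : ∃ k : ℕ, ∃ l : List V, (∀ δ ∈ l, δ ∈ Δ) ∧ wprod l = g⁻¹ ∧ l.length = k := by
    obtain ⟨l, h1, h2⟩ := rep g⁻¹ hgG0
    exact ⟨l.length, l, h1, h2, rfl⟩
  obtain ⟨l, hlΔ, hlu, hln⟩ := Nat.find_spec hexlen
  have hlne : l ≠ [] := by
    intro h
    rw [h, wprod_nil] at hlu
    exact hune hlu.symm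
  rcases List.eq_nil_or_concat l with h | ⟨l', α, hcat⟩
  · exact hlne h
  rw [List.concat_eq_append] at hcat
  have hαΔ : α ∈ Δ := hlΔ α (by rw [hcat]; simp)
  have hl'Δ : ∀ δ ∈ l', δ ∈ Δ := fun δ hδ => hlΔ δ (by rw [hcat]; exact List.mem_append_left _ hδ)
  have hmin : ∀ l₂ : List V, (∀ δ ∈ l₂, δ ∈ Δ) →
      wprod l₂ = wprod (l' ++ [α]) → l'.length + 1 ≤ l₂.length := by
    intro l₂ hl₂ hpr
    have hk := Nat.find_min' hexlen (m := l₂.length) ⟨l₂, hl₂, by rw [hpr, ← hcat, hlu], rfl⟩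
    have : l.length = l'.length + 1 := by rw [hcat]; simp
    omega
  have hneg := last_letter_neg hΔ1 hΔ2 hΔ3 hu hcl hc hl'Δ hαΔ hmin
  rw [← hcat, hlu] at hneg
  have hαP := mem_PosS.mp (hΔ1 hαΔ)
  have hchamα := hcham α hαP.1
  rw [← inner_inv_left g α c] at hchamα
  nlinarith [hαP.2, hneg, hchamα]

/-! ### Assembly helpers -/

theorem root_fiber {w : V ≃ₗᵢ[ℝ] V} {α₀ β : V} (h₀ : ‖α₀‖ = 1 ∧ sref α₀ = w)
    (hβ : ‖β‖ = 1 ∧ sref β = w) : β = α₀ ∨ β = -α₀ := by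
  have heq : sref β β = sref α₀ β := by rw [hβ.2, h₀.2]
  rw [sref_root hβ.1, sref_apply h₀.1] at heq
  have hβα : β = ⟪α₀, β⟫ • α₀ := by
    have h2 : (2 : ℝ) • β = (2 * ⟪α₀, β⟫) • α₀ := by
      have : (2:ℝ) • β = β - (-β) := by module
      rw [this, heq]
      module
    have := congrArg (fun x : V => (2:ℝ)⁻¹ • x) h2
    simpa [smul_smul, ← mul_assoc] using this
  have habs : |⟪α₀, β⟫| = 1 := by
    have h1 := hβ.1
    rw [hβα, norm_smul, h₀.1, mul_one] at h1
    exact h1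
  rcases abs_eq (by norm_num : (0:ℝ) ≤ 1) |>.mp habs with h | h
  · left; rw [hβα, h, one_smul]
  · right; rw [hβα, h]; module

theorem root_set_finite (W : Subgroup (V ≃ₗᵢ[ℝ] V)) (hWfin : (W : Set (V ≃ₗᵢ[ℝ] V)).Finite) :
    {α : V | ‖α‖ = 1 ∧ sref α ∈ W}.Finite := by
  have hsub : {α : V | ‖α‖ = 1 ∧ sref α ∈ W} ⊆
      ⋃ w ∈ (W : Set (V ≃ₗᵢ[ℝ] V)), {α : V | ‖α‖ = 1 ∧ sref α = w} := by
    rintro α ⟨h1, h2⟩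
    exact Set.mem_biUnion h2 ⟨h1, rfl⟩
  refine Set.Finite.subset (Set.Finite.biUnion hWfin ?_) hsub
  intro w _
  rcases Set.eq_empty_or_nonempty {α : V | ‖α‖ = 1 ∧ sref α = w} with h | ⟨α₀, hα₀⟩
  · rw [h]; exact Set.finite_empty
  · apply Set.Finite.subset ((Set.finite_singleton α₀).insert (-α₀))
    intro β hβ
    rcases root_fiber hα₀ hβ with h | h
    · exact Set.mem_insert_iff.mpr (Or.inr (h ▸ rfl))
    · exact Set.mem_insert_iff.mpr (Or.inl h)

theorem exists_generic (X : Submodule ℝ V) (S : Finset V)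
    (hS : ∀ β ∈ S, ∃ x ∈ X, ⟪β, x⟫ ≠ 0) :
    ∃ x₀ ∈ X, ∀ β ∈ S, ⟪β, x₀⟫ ≠ 0 := by
  classical
  induction S using Finset.induction_on with
  | empty => exact ⟨0, X.zero_mem, by simp⟩
  | @insert β₀ S hβ₀S ih =>
    obtain ⟨x₀, hx₀X, hx₀⟩ := ih (fun β hβ => hS β (Finset.mem_insert_of_mem hβ))
    obtain ⟨y, hyX, hy⟩ := hS β₀ (Finset.mem_insert_self _ _)
    obtain ⟨t, ht⟩ := Infinite.exists_notMem_finset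
      ((insert β₀ S).image (fun β => -⟪β, x₀⟫ / ⟪β, y⟫))
    refine ⟨x₀ + t • y, X.add_mem hx₀X (X.smul_mem t hyX), ?_⟩
    intro β hβ
    rw [inner_add_right, real_inner_smul_right]
    intro heq
    by_cases hβy : ⟪β, y⟫ = 0
    · rcases Finset.mem_insert.mp hβ with rfl | hβS
      · exact hy hβy
      · rw [hβy, mul_zero, add_zero] at heq
        exact hx₀ β hβS heq
    · apply ht
      have htval : t = -⟪β, x₀⟫ / ⟪β, y⟫ := by
        field_simp
        linarith
      rw [htval]
      exact Finset.mem_image_of_mem _ hβ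

theorem sign_stable {a s t : ℝ} (hs : |s| < |a|) (ht : |t| < |a|) : 0 < (a + s) * (a + t) := by
  rcases lt_trichotomy a 0 with h | h | h
  · rw [abs_of_neg h] at hs ht
    have h1 := abs_lt.mp hs
    have h2 := abs_lt.mp ht
    apply mul_pos_of_neg_of_neg <;> linarith
  · rw [h, abs_zero] at hs
    exact absurd hs (abs_nonneg s).not_gt
  · rw [abs_of_pos h] at hs ht
    have h1 := abs_lt.mp hs
    have h2 := abs_lt.mp ht
    apply mul_pos <;> linarith

theorem sign_trans {A B C : ℝ} (h1 : 0 < A * B) (h2 : 0 < B * C) : 0 < A * C := by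
  rcases mul_pos_iff.mp h1 with ⟨hA, hB⟩ | ⟨hA, hB⟩ <;>
    rcases mul_pos_iff.mp h2 with ⟨hB', hC⟩ | ⟨hB', hC⟩
  · exact mul_pos hA hC
  · linarith
  · linarith
  · exact mul_pos_of_neg_of_neg hA hC

theorem sref_norm_sq {α : V} (hα : ‖α‖ = 1) (y d : V) :
    ‖sref α y - d‖ ^ 2 = ‖y - d‖ ^ 2 + 4 * ⟪α, y⟫ * ⟪α, d⟫ := by
  rw [sref_apply hα]
  rw [← real_inner_self_eq_norm_sq, ← real_inner_self_eq_norm_sq]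
  simp only [inner_sub_left, inner_sub_right, real_inner_smul_left, real_inner_smul_right]
  rw [real_inner_self_eq_norm_sq α, hα]
  rw [real_inner_comm y α, real_inner_comm d α]
  ring

theorem sref_norm_lt {α : V} (hα : ‖α‖ = 1) {y d : V} (h : ⟪α, y⟫ * ⟪α, d⟫ < 0) :
    ‖sref α y - d‖ < ‖y - d‖ := by
  have h2 := sref_norm_sq hα y d
  nlinarith [norm_nonneg (sref α y - d), norm_nonneg (y - d)]

theorem parabolic_has_complement_in_normalizer'
    (W : Subgroup (V ≃ₗᵢ[ℝ] V))
    (hWfin : (W : Set (V ≃ₗᵢ[ℝ] V)).Finite)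
    (hWgen : W = Subgroup.closure {r : V ≃ₗᵢ[ℝ] V | r ∈ W ∧ IsReflection r})
    (X : Submodule ℝ V) (P : Subgroup (V ≃ₗᵢ[ℝ] V))
    (hP : P = pointwiseStabilizer W (X : Set V)) :
    ∃ H : Subgroup (V ≃ₗᵢ[ℝ] V), H ≤ W ⊓ Subgroup.normalizer (P : Set (V ≃ₗᵢ[ℝ] V)) ∧ P ⊓ H = ⊥ ∧
      ∀ n ∈ W ⊓ Subgroup.normalizer (P : Set (V ≃ₗᵢ[ℝ] V)), ∃ p ∈ P, ∃ h ∈ H, n = p * h := by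
  classical
  have hΦfin := root_set_finite W hWfin
  set Φ : Finset V := hΦfin.toFinset with hΦdef
  have hmemΦ : ∀ {α : V}, α ∈ Φ ↔ (‖α‖ = 1 ∧ sref α ∈ W) := fun {α} => by
    rw [hΦdef, Set.Finite.mem_toFinset]
    rfl
  have hu : ∀ α ∈ Φ, ‖α‖ = 1 := fun α h => (hmemΦ.mp h).1
  have hsW : ∀ α ∈ Φ, sref α ∈ W := fun α h => (hmemΦ.mp h).2
  have hstab : ∀ w ∈ W, ∀ α ∈ Φ, w α ∈ Φ := by
    intro w hw α hα
    rw [hmemΦ]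
    refine ⟨by rw [w.norm_map]; exact hu α hα, ?_⟩
    rw [← sref_conj (hu α hα) w]
    exact W.mul_mem (W.mul_mem hw (hsW α hα)) (W.inv_mem hw)
  have hcl : ∀ α ∈ Φ, ∀ β ∈ Φ, sref α β ∈ Φ := fun α hα β hβ => hstab _ (hsW α hα) β hβ
  have hWle : W ≤ Subgroup.closure {r : V ≃ₗᵢ[ℝ] V | ∃ α ∈ Φ, r = sref α} := by
    conv_lhs => rw [hWgen]
    rw [Subgroup.closure_le]
    rintro r ⟨hrW, hrRefl⟩
    obtain ⟨α, hα1, rfl⟩ := hrRefl.eq_sref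
    exact Subgroup.subset_closure ⟨α, hmemΦ.mpr ⟨hα1, hrW⟩, rfl⟩
  have hPle : P ≤ W := by rw [hP]; exact fun p hp => hp.1
  have hPmem : ∀ {p : V ≃ₗᵢ[ℝ] V}, p ∈ P ↔ (p ∈ W ∧ ∀ v ∈ (X : Set V), p v = v) := by
    intro p
    rw [hP]
    rfl
  have hrootP : ∀ α ∈ Φ, (sref α ∈ P ↔ ∀ x ∈ (X : Set V), ⟪α, x⟫ = 0) := by
    intro α hα
    have hα0 : α ≠ 0 := by
      intro h
      have := hu α hα
      rw [h, norm_zero] at this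
      norm_num at this
    constructor
    · intro h x hx
      have hfix := (hPmem.mp h).2 x hx
      rw [sref_apply (hu α hα)] at hfix
      have h2 : (2 * ⟪α, x⟫) • α = 0 := by
        have := sub_eq_self.mp hfix
        exact this
      rcases smul_eq_zero.mp h2 with h3 | h3
      · linarith
      · exact absurd h3 hα0
    · intro h
      exact hPmem.mpr ⟨hsW α hα, fun x hx => sref_fix (hu α hα) (h x hx)⟩
  set ΦP : Finset V := Φ.filter (fun α => sref α ∈ P) with hΦPdef
  set Sbig : Finset V := Φ.filter (fun α => sref α ∉ P) with hSbigdef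
  -- choose x₀ ∈ X generic for the non-parabolic roots
  obtain ⟨x₀, hx₀X, hx₀⟩ := exists_generic X Sbig (by
    intro β hβ
    obtain ⟨hβΦ, hβP⟩ := Finset.mem_filter.mp hβ
    by_contra hno
    push_neg at hno
    exact hβP ((hrootP β hβΦ).mpr (fun x hx => hno x hx)))
  -- choose v generic for all roots
  obtain ⟨v, -, hv⟩ := exists_generic ⊤ Φ (by
    intro β hβ
    refine ⟨β, Submodule.mem_top, ?_⟩
    rw [real_inner_self_eq_norm_sq, hu β hβ]
    norm_num)
  -- choose ε
  set M : Finset ℝ := insert 1 (Sbig.image (fun β => |⟪β, x₀⟫|)) with hMdef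
  have hMne : M.Nonempty := ⟨1, Finset.mem_insert_self _ _⟩
  set m : ℝ := M.min' hMne with hmdef
  have hmpos : 0 < m := by
    rw [hmdef, Finset.lt_min'_iff]
    intro b hb
    rcases Finset.mem_insert.mp hb with rfl | hb
    · norm_num
    · obtain ⟨β, hβ, rfl⟩ := Finset.mem_image.mp hb
      exact abs_pos.mpr (hx₀ β hβ)
  have hmle : ∀ β ∈ Sbig, m ≤ |⟪β, x₀⟫| := fun β hβ =>
    Finset.min'_le _ _ (Finset.mem_insert_of_mem (Finset.mem_image_of_mem _ hβ))
  set ε : ℝ := m / (2 * (‖v‖ + 1)) with hεdef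
  have hεpos : 0 < ε := by
    rw [hεdef]
    positivity
  have hεv : ε * ‖v‖ < m := by
    rw [hεdef, div_mul_eq_mul_div, div_lt_iff₀ (by positivity)]
    nlinarith [norm_nonneg v, hmpos]
  set cc : V := x₀ + ε • v with hccdef
  have hccin : ∀ α u, ⟪α, x₀ + ε • u⟫ = ⟪α, x₀⟫ + ε * ⟪α, u⟫ := by
    intro α u
    rw [inner_add_right, real_inner_smul_right]
  have hbound : ∀ α ∈ Φ, ∀ u : V, ‖u‖ ≤ ‖v‖ → |ε * ⟪α, u⟫| < m := by
    intro α hα u hu'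
    rw [abs_mul, abs_of_pos hεpos]
    calc ε * |⟪α, u⟫| ≤ ε * ‖u‖ := by
          apply mul_le_mul_of_nonneg_left _ (le_of_lt hεpos)
          calc |⟪α, u⟫| ≤ ‖α‖ * ‖u‖ := abs_real_inner_le_norm α u
            _ = ‖u‖ := by rw [hu α hα, one_mul]
      _ ≤ ε * ‖v‖ := mul_le_mul_of_nonneg_left hu' (le_of_lt hεpos)
      _ < m := hεv
  have hccgen : ∀ α ∈ Φ, ⟪α, cc⟫ ≠ 0 := by
    intro α hα
    rw [hccdef, hccin]
    by_cases hαP' : sref α ∈ P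
    · have h0 : ⟪α, x₀⟫ = 0 := (hrootP α hα).mp hαP' x₀ hx₀X
      rw [h0, zero_add]
      exact mul_ne_zero (ne_of_gt hεpos) (hv α hα)
    · have hαS : α ∈ Sbig := Finset.mem_filter.mpr ⟨hα, hαP'⟩
      have h1 : |ε * ⟪α, v⟫| < |⟪α, x₀⟫| := lt_of_lt_of_le (hbound α hα v le_rfl) (hmle α hαS)
      intro heq
      have : |ε * ⟪α, v⟫| = |⟪α, x₀⟫| := by
        rw [show ε * ⟪α, v⟫ = -⟪α, x₀⟫ by linarith, abs_neg]
      linarith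
  set N : Subgroup (V ≃ₗᵢ[ℝ] V) := W ⊓ Subgroup.normalizer (P : Set (V ≃ₗᵢ[ℝ] V)) with hNdef
  have hPN : P ≤ N := le_inf hPle Subgroup.le_normalizer
  have hNstab : ∀ n ∈ N, ∀ α ∈ ΦP, n α ∈ ΦP := by
    intro n hn α hα
    obtain ⟨hnW, hnN⟩ := Subgroup.mem_inf.mp hn
    obtain ⟨hα1, hα2⟩ := Finset.mem_filter.mp hα
    refine Finset.mem_filter.mpr ⟨hstab n hnW α hα1, ?_⟩
    rw [← sref_conj (hu α hα1) n]
    exact (Subgroup.mem_normalizer_iff.mp hnN _).mp hα2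
  -- the complement H
  set H : Subgroup (V ≃ₗᵢ[ℝ] V) :=
    { carrier := {n | n ∈ N ∧ ∀ α ∈ ΦP, 0 < ⟪α, cc⟫ * ⟪α, n cc⟫}
      one_mem' := ⟨N.one_mem, fun α hα => by
        have hne := hccgen α (Finset.mem_filter.mp hα).1
        have h1 : (1 : V ≃ₗᵢ[ℝ] V) cc = cc := rfl
        rw [h1]
        exact mul_self_pos.mpr hne⟩
      mul_mem' := fun {a b} ha hb => ⟨N.mul_mem ha.1 hb.1, fun α hα => by
        have hγ : a⁻¹ α ∈ ΦP := hNstab a⁻¹ (N.inv_mem ha.1) α hα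
        have h1 := ha.2 α hα
        have h2 := hb.2 _ hγ
        have e1 : ⟪a⁻¹ α, cc⟫ = ⟪α, a cc⟫ := inner_inv_left a α cc
        have e2 : ⟪α, (a * b) cc⟫ = ⟪a⁻¹ α, b cc⟫ := by
          rw [mul_apply']
          exact (inner_inv_left a α (b cc)).symm
        rw [e2]
        rw [← e1] at h1
        exact sign_trans h1 h2⟩
      inv_mem' := fun {a} ha => ⟨N.inv_mem ha.1, fun α hα => by
        have hγ : a α ∈ ΦP := hNstab a ha.1 α hα
        have h1 := ha.2 _ hγ
        have e1 : ⟪a α, a cc⟫ = ⟪α, cc⟫ := inner_map a α cc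
        have e2 : ⟪a α, cc⟫ = ⟪α, a⁻¹ cc⟫ := by
          have h3 := inner_map a α (a⁻¹ cc)
          rw [apply_inv_apply] at h3
          exact h3
        rw [e1, e2] at h1
        rw [mul_comm] at h1
        exact h1⟩ } with hHdef
  have hHmem : ∀ {x : V ≃ₗᵢ[ℝ] V},
      x ∈ H ↔ (x ∈ N ∧ ∀ α ∈ ΦP, 0 < ⟪α, cc⟫ * ⟪α, x cc⟫) := fun {x} => Iff.rfl
  refine ⟨H, fun x hx => (hHmem.mp hx).1, ?_, ?_⟩
  · -- P ⊓ H = ⊥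
    rw [Subgroup.eq_bot_iff_forall]
    intro p hp
    obtain ⟨hpP, hpH⟩ := Subgroup.mem_inf.mp hp
    apply core_trivial_stab Φ cc hu hcl hccgen p (hWle (hPle hpP))
    intro α hα
    by_cases hαinP : sref α ∈ P
    · exact (hHmem.mp hpH).2 α (Finset.mem_filter.mpr ⟨hα, hαinP⟩)
    · have hαS : α ∈ Sbig := Finset.mem_filter.mpr ⟨hα, hαinP⟩
      have hpx₀ : p x₀ = x₀ := (hPmem.mp hpP).2 x₀ hx₀X
      have hpcc : p cc = x₀ + ε • (p v) := by
        rw [hccdef, map_add, LinearIsometryEquiv.map_smul, hpx₀]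
      have h1 : ⟪α, cc⟫ = ⟪α, x₀⟫ + ε * ⟪α, v⟫ := by rw [hccdef, hccin]
      have h2 : ⟪α, p cc⟫ = ⟪α, x₀⟫ + ε * ⟪α, p v⟫ := by rw [hpcc, hccin]
      rw [h1, h2]
      have hma := hmle α hαS
      exact sign_stable (lt_of_lt_of_le (hbound α hα v le_rfl) hma)
        (lt_of_lt_of_le (hbound α hα (p v) (le_of_eq (p.norm_map v))) hma)
  · -- surjectivity
    intro n hn
    have hnN : n ∈ N := hn
    obtain ⟨hnW, hnNorm⟩ := Subgroup.mem_inf.mp hnN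
    set GX : Subgroup (V ≃ₗᵢ[ℝ] V) :=
      Subgroup.closure {r : V ≃ₗᵢ[ℝ] V | ∃ α ∈ ΦP, r = sref α} with hGXdef
    have hGXP : GX ≤ P := by
      rw [hGXdef, Subgroup.closure_le]
      rintro r ⟨α, hα, rfl⟩
      exact (Finset.mem_filter.mp hα).2
    have hGXfin : ((GX : Set (V ≃ₗᵢ[ℝ] V))).Finite :=
      hWfin.subset (fun g hg => hPle (hGXP hg))
    obtain ⟨k, hkGX, hkmin⟩ := Set.exists_min_image (GX : Set (V ≃ₗᵢ[ℝ] V))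
      (fun k => ‖k (n cc) - cc‖) hGXfin ⟨1, GX.one_mem⟩
    have hkmem : k ∈ GX := hkGX
    have hkP : k ∈ P := hGXP hkmem
    have hkW : k ∈ W := hPle hkP
    have hchamber : ∀ α ∈ ΦP, 0 < ⟪α, cc⟫ * ⟪α, (k * n) cc⟫ := by
      intro α hα
      obtain ⟨hαΦ', hαP'⟩ := Finset.mem_filter.mp hα
      have happ : (k * n) cc = k (n cc) := rfl
      have hne : ⟪α, (k * n) cc⟫ ≠ 0 := by
        have hknW : (k * n)⁻¹ ∈ W := W.inv_mem (W.mul_mem hkW hnW)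
        have heq : ⟪(k * n)⁻¹ α, cc⟫ = ⟪α, (k * n) cc⟫ := inner_inv_left _ α cc
        rw [← heq]
        exact hccgen _ (hstab _ hknW α hαΦ')
      have hnonneg : ¬ (⟪α, k (n cc)⟫ * ⟪α, cc⟫ < 0) := by
        intro hlt
        have hdec := sref_norm_lt (hu α hαΦ') hlt
        have hmem2 : sref α * k ∈ GX :=
          GX.mul_mem (Subgroup.subset_closure ⟨α, hα, rfl⟩) hkmem
        have hge := hkmin _ hmem2
        have happ2 : (sref α * k) (n cc) = sref α (k (n cc)) := rfl
        rw [happ2] at hge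
        linarith
      rw [happ]
      have hprodne : ⟪α, k (n cc)⟫ * ⟪α, cc⟫ ≠ 0 :=
        mul_ne_zero (by rw [← happ]; exact hne) (hccgen α hαΦ')
      have := lt_of_le_of_ne (not_lt.mp hnonneg) (Ne.symm hprodne)
      rw [mul_comm] at this
      exact this
    refine ⟨k⁻¹, P.inv_mem hkP, k * n, hHmem.mpr ⟨N.mul_mem (hPN hkP) hnN, hchamber⟩, ?_⟩
    group

/-- Every parabolic subgroup `P = Z_W(X)` of a finite real reflection group `W` has a
complement in its normalizer `N_W(P) = W ⊓ P.normalizer`. -/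
theorem parabolic_has_complement_in_normalizer
    (W : Subgroup (V ≃ₗᵢ[ℝ] V))
    (hWfin : (W : Set (V ≃ₗᵢ[ℝ] V)).Finite)
    (hWgen : W = Subgroup.closure {r : V ≃ₗᵢ[ℝ] V | r ∈ W ∧ IsReflection r})
    (X : Submodule ℝ V) (P : Subgroup (V ≃ₗᵢ[ℝ] V))
    (hP : P = pointwiseStabilizer W (X : Set V)) :
    ∃ H : Subgroup (V ≃ₗᵢ[ℝ] V), H ≤ W ⊓ Subgroup.normalizer (P : Set (V ≃ₗᵢ[ℝ] V)) ∧ P ⊓ H = ⊥ ∧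
      ∀ n ∈ W ⊓ Subgroup.normalizer (P : Set (V ≃ₗᵢ[ℝ] V)), ∃ p ∈ P, ∃ h ∈ H, n = p * h :=
  parabolic_has_complement_in_normalizer' W hWfin hWgen X P hP
end

section
/- A parabolic subgroup P of W is orthogonally closed (i.e., P°° = P) if and only if there exists a set R of roots of W (nonzero vectors α ∈ V such that the orthogonal reflection with root α lies in W) with P = Z_W(R), the pointwise stabilizer of R in W. -/
set_option linter.unusedSectionVars false
set_option maxHeartbeats 1000000


open scoped RealInnerProductSpace

variable {V : Type*} [NormedAddCommGroup V] [InnerProductSpace ℝ V] [FiniteDimensional ℝ V]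

/-- The set of reflections lying in `W`. -/
def reflectionsIn (W : Subgroup (V ≃ₗᵢ[ℝ] V)) : Set (V ≃ₗᵢ[ℝ] V) :=
  {t | t ∈ W ∧ IsReflection t}

/-- The orthogonal complement `U°` of a subgroup `U` of `W`: the subgroup generated by the
reflections of `W` that commute with, and differ from, every reflection of `W` lying in `U`. -/
def orthogonalComplement (W U : Subgroup (V ≃ₗᵢ[ℝ] V)) : Subgroup (V ≃ₗᵢ[ℝ] V) :=
  Subgroup.closure {t | t ∈ reflectionsIn W ∧
    ∀ s ∈ reflectionsIn W, s ∈ U → t * s = s * t ∧ t ≠ s}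


namespace OC
open scoped Classical


/-- `r` is a reflection with root `α`. -/
def HasRoot (r : V ≃ₗᵢ[ℝ] V) (α : V) : Prop :=
  α ≠ 0 ∧ r α = -α ∧ ∀ v : V, ⟪α, v⟫ = 0 → r v = v

theorem isReflection_iff {r : V ≃ₗᵢ[ℝ] V} : IsReflection r ↔ ∃ α, HasRoot r α := Iff.rfl

theorem HasRoot.coeff_orth (α v : V) (hα : α ≠ 0) :
    ⟪α, v - (⟪α, v⟫ / ‖α‖ ^ 2) • α⟫ = 0 := by
  rw [inner_sub_right, real_inner_smul_right, real_inner_self_eq_norm_sq]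
  rw [div_mul_eq_mul_div, mul_div_assoc, div_self (pow_ne_zero 2 (norm_ne_zero_iff.mpr hα)),
    mul_one, sub_self]

theorem HasRoot.apply_eq {r : V ≃ₗᵢ[ℝ] V} {α : V} (h : HasRoot r α) (v : V) :
    r v = v - ((2 * ⟪α, v⟫ / ‖α‖ ^ 2)) • α := by
  obtain ⟨hα, hneg, hfix⟩ := h
  have hv : v = (v - (⟪α, v⟫ / ‖α‖ ^ 2) • α) + (⟪α, v⟫ / ‖α‖ ^ 2) • α := by abel
  set c : ℝ := ⟪α, v⟫ / ‖α‖ ^ 2 with hc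
  calc r v = r ((v - c • α) + c • α) := by rw [← hv]
    _ = r (v - c • α) + c • r α := by rw [map_add, map_smul]
    _ = (v - c • α) + c • (-α) := by rw [hfix _ (HasRoot.coeff_orth α v hα), hneg]
    _ = v - (2 * ⟪α, v⟫ / ‖α‖ ^ 2) • α := by
        rw [smul_neg]
        rw [show (2 * ⟪α, v⟫ / ‖α‖ ^ 2) = c + c by rw [hc]; ring]
        rw [add_smul]; abel

theorem HasRoot.fix_iff {r : V ≃ₗᵢ[ℝ] V} {α : V} (h : HasRoot r α) {v : V} :
    r v = v ↔ ⟪α, v⟫ = 0 := by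
  constructor
  · intro hv
    rw [h.apply_eq v] at hv
    have h2 : (2 * ⟪α, v⟫ / ‖α‖ ^ 2) • α = 0 := by
      linear_combination (norm := module) -hv
    rcases smul_eq_zero.mp h2 with hc | hc
    · have hn : ‖α‖ ^ 2 ≠ 0 := pow_ne_zero 2 (norm_ne_zero_iff.mpr h.1)
      field_simp [hn] at hc
      have := (div_eq_zero_iff.mp hc).resolve_right hn
      linarith
    · exact absurd hc h.1
  · exact h.2.2 v

theorem HasRoot.neg_iff {r : V ≃ₗᵢ[ℝ] V} {α : V} (h : HasRoot r α) {v : V} :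
    r v = -v ↔ ∃ c : ℝ, v = c • α := by
  constructor
  · intro hv
    rw [h.apply_eq v] at hv
    refine ⟨(⟪α, v⟫ / ‖α‖ ^ 2), ?_⟩
    have h2 : (2:ℝ) • v = ((2 * ⟪α, v⟫ / ‖α‖ ^ 2)) • α := by
      linear_combination (norm := module) hv
    have h3 : ((2:ℝ)⁻¹ * 2) • v = ((2:ℝ)⁻¹ * (2 * ⟪α, v⟫ / ‖α‖ ^ 2)) • α := by
      rw [mul_smul, mul_smul, h2]
    rw [show (2:ℝ)⁻¹ * (2 * ⟪α, v⟫ / ‖α‖ ^ 2) = ⟪α, v⟫ / ‖α‖ ^ 2 by ring] at h3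
    rw [show ((2:ℝ)⁻¹ * 2) = 1 by norm_num, one_smul] at h3
    exact h3
  · rintro ⟨c, rfl⟩
    rw [map_smul, h.2.1, smul_neg]

/-- Two reflections with a common root are equal. -/
theorem HasRoot.ext {r s : V ≃ₗᵢ[ℝ] V} {α : V} (hr : HasRoot r α) (hs : HasRoot s α) :
    r = s := by
  ext v
  rw [hr.apply_eq v, hs.apply_eq v]

/-- A reflection squares to the identity. -/
theorem HasRoot.mul_self {r : V ≃ₗᵢ[ℝ] V} {α : V} (h : HasRoot r α) : r * r = 1 := by
  ext v
  have hn : ‖α‖ ^ 2 ≠ 0 := pow_ne_zero 2 (norm_ne_zero_iff.mpr h.1)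
  have h1 : ⟪α, r v⟫ = -⟪α, v⟫ := by
    rw [h.apply_eq v, inner_sub_right, real_inner_smul_right, real_inner_self_eq_norm_sq]
    rw [div_mul_cancel₀ _ hn]
    ring
  show r (r v) = v
  rw [h.apply_eq (r v), h1, h.apply_eq v]
  rw [show 2 * -⟪α, v⟫ / ‖α‖ ^ 2 = -(2 * ⟪α, v⟫ / ‖α‖ ^ 2) by ring, neg_smul]
  abel

theorem HasRoot.inv_eq {r : V ≃ₗᵢ[ℝ] V} {α : V} (h : HasRoot r α) : r⁻¹ = r := by
  exact inv_eq_of_mul_eq_one_right h.mul_self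

/-- Conjugate of a reflection. -/
theorem HasRoot.conj {r w : V ≃ₗᵢ[ℝ] V} {α : V} (h : HasRoot r α) :
    HasRoot (w * r * w⁻¹) (w α) := by
  refine ⟨fun h0 => h.1 (by simpa using congrArg w.symm h0), ?_, ?_⟩
  · show w (r (w⁻¹ (w α))) = _
    have : w⁻¹ (w α) = α := w.symm_apply_apply α
    rw [this, h.2.1, map_neg]
  · intro v hv
    show w (r (w⁻¹ v)) = v
    have hv' : ⟪α, w⁻¹ v⟫ = 0 := by
      have : ⟪w α, w (w⁻¹ v)⟫ = ⟪α, w⁻¹ v⟫ := w.inner_map_map α (w⁻¹ v)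
      rw [show w (w⁻¹ v) = v from w.apply_symm_apply v] at this
      rw [← this, hv]
    have hwv : w (w⁻¹ v) = v := w.apply_symm_apply v
    rw [h.2.2 _ hv']
    exact hwv



/-- A root can be rescaled. -/
theorem HasRoot.smul {r : V ≃ₗᵢ[ℝ] V} {α : V} (h : HasRoot r α) {c : ℝ} (hc : c ≠ 0) :
    HasRoot r (c • α) := by
  refine ⟨smul_ne_zero hc h.1, by rw [map_smul, h.2.1, smul_neg], fun v hv => ?_⟩
  apply h.2.2
  rw [real_inner_smul_left] at hv
  rcases mul_eq_zero.mp hv with h0 | h0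
  · exact absurd h0 hc
  · exact h0

/-- If a reflection negates a nonzero vector, that vector is (up to scalar) its root;
hence the reflection has it as root. -/
theorem HasRoot.of_neg {r : V ≃ₗᵢ[ℝ] V} {α v : V} (h : HasRoot r α) (hv : v ≠ 0)
    (hneg : r v = -v) : HasRoot r v := by
  obtain ⟨c, rfl⟩ := h.neg_iff.mp hneg
  have hc : c ≠ 0 := by rintro rfl; simp at hv
  exact h.smul hc

/-- Commuting distinct reflections: the second fixes the root of the first. -/
theorem HasRoot.fix_root_of_commute {r s : V ≃ₗᵢ[ℝ] V} {α β : V} (hr : HasRoot r α)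
    (hs : HasRoot s β) (hcomm : r * s = s * r) (hne : r ≠ s) : s α = α := by
  have hconj : HasRoot (s * r * s⁻¹) (s α) := hr.conj
  have heq : s * r * s⁻¹ = r := by
    rw [← hcomm]; group
  rw [heq] at hconj
  -- r (s α) = - (s α), so s α ∈ ℝ • α
  have hsα : s α ≠ 0 := hconj.1
  have : HasRoot r (s α) := hconj
  obtain ⟨c, hcα⟩ := hr.neg_iff.mp this.2.1
  have hnorm : ‖s α‖ = ‖α‖ := s.norm_map α
  have hc1 : |c| = 1 := by
    rw [hcα, norm_smul, Real.norm_eq_abs] at hnorm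
    have h0 : ‖α‖ ≠ 0 := norm_ne_zero_iff.mpr hr.1
    field_simp at hnorm
    tauto
  rcases abs_eq (by norm_num : (0:ℝ) ≤ 1) |>.mp hc1 with h1 | h1
  · rw [h1, one_smul] at hcα; exact hcα
  · exfalso
    rw [h1, neg_one_smul] at hcα
    have hneg : s α = -α := hcα
    have hsroot : HasRoot s α := hs.of_neg hr.1 hneg
    exact hne (hr.ext hsroot)

theorem HasRoot.orth_of_commute {r s : V ≃ₗᵢ[ℝ] V} {α β : V} (hr : HasRoot r α)
    (hs : HasRoot s β) (hcomm : r * s = s * r) (hne : r ≠ s) : ⟪α, β⟫ = 0 := by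
  have := hs.fix_iff.mp (hr.fix_root_of_commute hs hcomm hne)
  rw [real_inner_comm] at this
  exact this

theorem HasRoot.commute_of_orth {r s : V ≃ₗᵢ[ℝ] V} {α β : V} (hr : HasRoot r α)
    (hs : HasRoot s β) (horth : ⟪α, β⟫ = 0) : r * s = s * r ∧ r ≠ s := by
  have hsα : s α = α := hs.fix_iff.mpr (by rw [real_inner_comm]; exact horth)
  have hconj : HasRoot (s * r * s⁻¹) (s α) := hr.conj
  rw [hsα] at hconj
  have heq : s * r * s⁻¹ = r := hconj.ext hr
  constructor
  · have : s * r * s⁻¹ * s = r * s := by rw [heq]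
    rw [inv_mul_cancel_right] at this
    exact this.symm
  · rintro rfl
    have h1 : -α = α := by rw [← hr.2.1]; exact hsα
    have h2 : (2:ℝ) • α = 0 := by linear_combination (norm := module) -h1
    rcases smul_eq_zero.mp h2 with h3 | h3
    · norm_num at h3
    · exact hr.1 h3

/-- The fixed subspace of a linear isometry. -/
def fixedSpace (w : V ≃ₗᵢ[ℝ] V) : Submodule ℝ V where
  carrier := {v | w v = v}
  add_mem' := fun ha hb => by simp only [Set.mem_setOf_eq, map_add] at *; rw [ha, hb]
  zero_mem' := by simp
  smul_mem' := fun c v hv => by simp only [Set.mem_setOf_eq, map_smul] at *; rw [hv]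

@[simp] theorem mem_fixedSpace {w : V ≃ₗᵢ[ℝ] V} {v : V} : v ∈ fixedSpace w ↔ w v = v :=
  Iff.rfl

theorem sub_mem_orth_fixedSpace (w : V ≃ₗᵢ[ℝ] V) (v : V) :
    w v - v ∈ (fixedSpace w)ᗮ := by
  rw [Submodule.mem_orthogonal]
  intro f hf
  rw [mem_fixedSpace] at hf
  rw [inner_sub_right]
  have h1 : ⟪f, w v⟫ = ⟪f, v⟫ := by
    nth_rewrite 1 [← hf]
    exact w.inner_map_map f v
  rw [h1, sub_self]

theorem exists_sub_of_mem_orth (w : V ≃ₗᵢ[ℝ] V) {α : V} (hα : α ∈ (fixedSpace w)ᗮ) :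
    ∃ v : V, w v - v = α := by
  set T : V →ₗ[ℝ] V := w.toLinearEquiv.toLinearMap - LinearMap.id with hT
  have hker : LinearMap.ker T = fixedSpace w := by
    ext v
    simp only [LinearMap.mem_ker, hT, LinearMap.sub_apply, LinearMap.id_apply,
      mem_fixedSpace, sub_eq_zero]
    exact Iff.rfl
  have hle : LinearMap.range T ≤ (fixedSpace w)ᗮ := by
    rintro x ⟨v, rfl⟩
    exact sub_mem_orth_fixedSpace w v
  have hrank : Module.finrank ℝ (LinearMap.range T) = Module.finrank ℝ ((fixedSpace w)ᗮ) := by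
    have h1 := LinearMap.finrank_range_add_finrank_ker T
    have h2 := Submodule.finrank_add_finrank_orthogonal (K := fixedSpace w)
    rw [hker] at h1
    omega
  have : LinearMap.range T = (fixedSpace w)ᗮ := Submodule.eq_of_le_of_finrank_eq hle hrank
  rw [← this] at hα
  obtain ⟨v, hv⟩ := hα
  exact ⟨v, hv⟩

/-- Key step: if `α = w v - v` is a root of reflection `r`, then `r * w` fixes `v`
and everything `w` fixes. -/
theorem fix_step {w r : V ≃ₗᵢ[ℝ] V} {α v : V} (hr : HasRoot r α) (hv : w v - v = α) :
    (r * w) v = v ∧ v ∉ fixedSpace w ∧ fixedSpace w ≤ fixedSpace (r * w) := by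
  have hwv : w v = v + α := by rw [← hv]; abel
  have hαv : 2 * ⟪α, v⟫ + ‖α‖ ^ 2 = 0 := by
    have h1 : ‖α‖ ^ 2 = ⟪w v - v, w v - v⟫ := by rw [hv, real_inner_self_eq_norm_sq]
    rw [inner_sub_left, inner_sub_right, inner_sub_right] at h1
    have h2 : ⟪w v, w v⟫ = ⟪v, v⟫ := w.inner_map_map v v
    have h3 : ⟪w v, v⟫ = ⟪v, w v⟫ := real_inner_comm _ _
    have h4 : ⟪α, v⟫ = ⟪w v, v⟫ - ⟪v, v⟫ := by rw [← hv, inner_sub_left]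
    rw [h2, h3] at h1
    rw [h4, h3]
    linarith
  have hn : ‖α‖ ^ 2 ≠ 0 := pow_ne_zero 2 (norm_ne_zero_iff.mpr hr.1)
  have hfix : (r * w) v = v := by
    show r (w v) = v
    rw [hwv, map_add, hr.2.1, hr.apply_eq v]
    have hc : 2 * ⟪α, v⟫ / ‖α‖ ^ 2 = -1 := by
      rw [div_eq_iff hn]
      linarith
    rw [hc, neg_one_smul]
    abel
  refine ⟨hfix, ?_, ?_⟩
  · rw [mem_fixedSpace, hwv]
    intro h
    exact hr.1 (by linear_combination (norm := module) h)
  · intro f hf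
    rw [mem_fixedSpace] at *
    show r (w f) = f
    rw [hf]
    apply hr.2.2
    have hmem : α ∈ (fixedSpace w)ᗮ := by rw [← hv]; exact sub_mem_orth_fixedSpace w v
    have h2 := (Submodule.mem_orthogonal _ _).mp hmem f hf
    rw [real_inner_comm] at h2
    exact h2



variable (W : Subgroup (V ≃ₗᵢ[ℝ] V))

/-- The set of (unit) roots of `W`. -/
def Phi : Set V := {α | ‖α‖ = 1 ∧ ∃ r ∈ W, HasRoot r α}

theorem neg_mem_Phi {α : V} (h : α ∈ Phi W) : -α ∈ Phi W := by
  obtain ⟨h1, r, hrW, hr⟩ := h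
  refine ⟨by rw [norm_neg]; exact h1, r, hrW, ?_⟩
  have := hr.smul (by norm_num : (-1:ℝ) ≠ 0)
  rwa [neg_one_smul] at this

theorem smul_mem_Phi {w : V ≃ₗᵢ[ℝ] V} (hw : w ∈ W) {α : V} (h : α ∈ Phi W) :
    w α ∈ Phi W := by
  obtain ⟨h1, r, hrW, hr⟩ := h
  exact ⟨by rw [w.norm_map]; exact h1, w * r * w⁻¹,
    W.mul_mem (W.mul_mem hw hrW) (W.inv_mem hw), hr.conj⟩

/-- Any reflection in `W` has a unit root in `Phi W`. -/
theorem exists_unit_root {r : V ≃ₗᵢ[ℝ] V} (hrW : r ∈ W) {β : V} (hr : HasRoot r β) :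
    ∃ α ∈ Phi W, HasRoot r α ∧ ∃ c : ℝ, c ≠ 0 ∧ β = c • α := by
  have hβ : ‖β‖ ≠ 0 := norm_ne_zero_iff.mpr hr.1
  refine ⟨‖β‖⁻¹ • β, ⟨?_, r, hrW, hr.smul (inv_ne_zero hβ)⟩, hr.smul (inv_ne_zero hβ),
    ‖β‖, hβ, ?_⟩
  · rw [norm_smul, norm_inv, norm_norm, inv_mul_cancel₀ hβ]
  · rw [smul_smul, mul_inv_cancel₀ hβ, one_smul]

theorem Phi_finite (hWfin : (W : Set (V ≃ₗᵢ[ℝ] V)).Finite) : (Phi W).Finite := by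
  have hsub : Phi W ⊆ ⋃ r ∈ (W : Set (V ≃ₗᵢ[ℝ] V)), {α | ‖α‖ = 1 ∧ HasRoot r α} := by
    rintro α ⟨h1, r, hrW, hr⟩
    exact Set.mem_biUnion hrW ⟨h1, hr⟩
  refine Set.Finite.subset (Set.Finite.biUnion hWfin fun r _ => ?_) hsub
  by_cases hne : ∃ α, ‖α‖ = 1 ∧ HasRoot r α
  · obtain ⟨α₀, hα₀n, hα₀⟩ := hne
    refine Set.Finite.subset ((Set.finite_singleton (-α₀)).insert α₀) ?_
    rintro β ⟨hβn, hβ⟩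
    obtain ⟨c, hc⟩ := hα₀.neg_iff.mp hβ.2.1
    have : |c| = 1 := by
      rw [hc, norm_smul, Real.norm_eq_abs, hα₀n, mul_one] at hβn
      exact hβn
    rcases (abs_eq (by norm_num : (0:ℝ) ≤ 1)).mp this with h1 | h1
    · left; rw [hc, h1, one_smul]
    · right; rw [hc, h1, neg_one_smul]; rfl
  · convert Set.finite_empty
    ext α
    simp only [Set.mem_setOf_eq, Set.mem_empty_iff_false, iff_false]
    exact fun h => hne ⟨α, h⟩

/-- A regular point for a finite family of vectors, within a subspace none of them
is orthogonal to. -/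
theorem exists_regular (F : Submodule ℝ V) {A : Set V} (hA : A.Finite)
    (h : ∀ α ∈ A, ∃ f ∈ F, ⟪α, f⟫ ≠ 0) :
    ∃ p ∈ F, ∀ α ∈ A, ⟪α, p⟫ ≠ 0 := by
  revert h
  refine Set.Finite.induction_on (motive := fun s _ => (∀ α ∈ s, ∃ f ∈ F, ⟪α, f⟫ ≠ 0) → ∃ p ∈ F, ∀ α ∈ s, ⟪α, p⟫ ≠ 0) A hA ?_ ?_
  · exact fun _ => ⟨0, F.zero_mem, fun α hα => absurd hα (Set.notMem_empty α)⟩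
  · rintro a s ha hs ih h
    obtain ⟨p, hpF, hp⟩ := ih fun α hα => h α (Set.mem_insert_of_mem a hα)
    obtain ⟨q, hqF, hq⟩ := h a (Set.mem_insert a s)
    by_cases hap : ⟪a, p⟫ = 0
    · -- use q + t • p with t avoiding finitely many bad values
      have hbad : (insert (0:ℝ) ((fun α => -⟪α, q⟫ / ⟪α, p⟫) '' s)).Finite :=
        Set.Finite.insert 0 (hs.image _)
      obtain ⟨t, ht⟩ := hbad.exists_notMem
      refine ⟨q + t • p, F.add_mem hqF (F.smul_mem t hpF), ?_⟩
      intro α hα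
      rw [inner_add_right, real_inner_smul_right]
      rcases Set.mem_insert_iff.mp hα with rfl | hαs
      · rw [hap, mul_zero, add_zero]; exact hq
      · intro h0
        apply ht
        right
        refine ⟨α, hαs, ?_⟩
        have hαp : ⟪α, p⟫ ≠ 0 := hp α hαs
        field_simp
        linarith
    · exact ⟨p, hpF, fun α hα => by
        rcases Set.mem_insert_iff.mp hα with rfl | hαs
        · exact hap
        · exact hp α hαs⟩




/-- Membership in the convex cone spanned by a finite set. -/
def InCone (S : Finset V) (x : V) : Prop :=
  ∃ c : V → ℝ, (∀ y ∈ S, 0 ≤ c y) ∧ x = ∑ y ∈ S, c y • y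

theorem inCone_of_mem {S : Finset V} {a : V} (ha : a ∈ S) : InCone S a := by
  classical
  refine ⟨fun y => if y = a then 1 else 0, fun y _ => by dsimp only; split_ifs <;> norm_num, ?_⟩
  have h1 : ∀ y ∈ S, (if y = a then (1:ℝ) else 0) • y = if y = a then y else 0 := by
    intro y _
    split_ifs with h
    · rw [one_smul]
    · rw [zero_smul]
  rw [Finset.sum_congr rfl h1, Finset.sum_ite_eq' S a (fun y => y), if_pos ha]

theorem sum_add_single {S : Finset V} {a : V} (ha : a ∈ S) (c : V → ℝ) (d : ℝ) :
    (∑ y ∈ S, c y • y) + d • a = ∑ y ∈ S, (c y + if y = a then d else 0) • y := by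
  classical
  have h1 : ∀ y ∈ S, (c y + if y = a then d else 0) • y
      = c y • y + (if y = a then d • y else 0) := by
    intro y _
    split_ifs with h
    · rw [add_smul]
    · rw [add_zero, add_zero]
  rw [Finset.sum_congr rfl h1, Finset.sum_add_distrib,
    Finset.sum_ite_eq' S a (fun y => d • y), if_pos ha]

theorem InCone.trans {S T : Finset V} {x : V} (hx : InCone S x)
    (h : ∀ y ∈ S, InCone T y) : InCone T x := by
  classical
  obtain ⟨c, hc, rfl⟩ := hx
  choose! d hd1 hd2 using h
  refine ⟨fun z => ∑ y ∈ S, c y * d y z, fun z hz =>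
    Finset.sum_nonneg fun y hy => mul_nonneg (hc y hy) (hd1 y hy z hz), ?_⟩
  calc ∑ y ∈ S, c y • y = ∑ y ∈ S, c y • (∑ z ∈ T, d y z • z) :=
        Finset.sum_congr rfl (fun y hy => congrArg (c y • ·) (hd2 y hy))
    _ = ∑ y ∈ S, ∑ z ∈ T, (c y * d y z) • z := by
        refine Finset.sum_congr rfl (fun y _ => ?_)
        rw [Finset.smul_sum]
        exact Finset.sum_congr rfl (fun z _ => (smul_smul (c y) (d y z) z))
    _ = ∑ z ∈ T, ∑ y ∈ S, (c y * d y z) • z := Finset.sum_comm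
    _ = ∑ z ∈ T, (∑ y ∈ S, c y * d y z) • z := by
        exact Finset.sum_congr rfl (fun z _ => (Finset.sum_smul).symm)

theorem exists_cone_basis (S : Finset V) : ∃ Δ : Finset V, Δ ⊆ S ∧ (∀ x ∈ S, InCone Δ x) ∧
    ∀ a ∈ Δ, ¬ InCone (Δ.erase a) a := by
  classical
  induction S using Finset.strongInduction with
  | _ S ih =>
    by_cases h : ∃ a ∈ S, InCone (S.erase a) a
    · obtain ⟨a, haS, ha⟩ := h
      obtain ⟨Δ, h1, h2, h3⟩ := ih (S.erase a) (Finset.erase_ssubset haS)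
      refine ⟨Δ, h1.trans (Finset.erase_subset a S), fun x hx => ?_, h3⟩
      by_cases hxa : x = a
      · subst hxa
        exact ha.trans h2
      · exact h2 x (Finset.mem_erase.mpr ⟨hxa, hx⟩)
    · push_neg at h
      exact ⟨S, Finset.Subset.refl S, fun x hx => inCone_of_mem hx, h⟩

/-- Extraction: if `d • x` is a nonnegative combination over `T` plus `e • z` with
`z ∈ T.erase x` and the coefficient of `x` is less than `d`, then `x` lies in the cone
of `T.erase x`. -/
theorem cone_extract {T : Finset V} {x z : V} {m : V → ℝ} {d e : ℝ}
    (hx : x ∈ T) (hz : z ∈ T) (hzx : z ≠ x)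
    (hm : ∀ y ∈ T, 0 ≤ m y) (he : 0 ≤ e)
    (heq : d • x = (∑ y ∈ T, m y • y) + e • z)
    (hmd : m x < d) : InCone (T.erase x) x := by
  classical
  have hz' : z ∈ T.erase x := Finset.mem_erase.mpr ⟨hzx, hz⟩
  have hsum : ∑ y ∈ T, m y • y = (∑ y ∈ T.erase x, m y • y) + m x • x :=
    (Finset.sum_erase_add _ _ hx).symm
  have heq2 : (d - m x) • x = (∑ y ∈ T.erase x, m y • y) + e • z := by
    rw [sub_smul]
    rw [heq, hsum]
    abel
  rw [sum_add_single hz' m e] at heq2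
  have hd : 0 < d - m x := by linarith
  refine ⟨fun y => (d - m x)⁻¹ * (m y + if y = z then e else 0), ?_, ?_⟩
  · intro y hy
    have h1 : 0 ≤ m y := hm y (Finset.mem_of_mem_erase hy)
    have h2 : (0:ℝ) ≤ if y = z then e else 0 := by
      split_ifs
      · exact he
      · exact le_rfl
    positivity
  · have h3 := congrArg (fun v => (d - m x)⁻¹ • v) heq2
    rw [smul_smul, inv_mul_cancel₀ (ne_of_gt hd), one_smul, Finset.smul_sum] at h3
    exact h3.trans (Finset.sum_congr rfl (fun y _ => smul_smul _ _ y))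

/-- No nontrivial vanishing combination when all heights are positive. -/
theorem cone_no_zero {p : V} {T : Finset V} {x z : V} {m : V → ℝ} {d e : ℝ}
    (hx : x ∈ T) (hz : z ∈ T)
    (hht : ∀ y ∈ T, 0 < ⟪y, p⟫)
    (hm : ∀ y ∈ T, 0 ≤ m y) (he : 0 < e)
    (heq : d • x = (∑ y ∈ T, m y • y) + e • z)
    (hmd : d ≤ m x) : False := by
  have h1 : d * ⟪x, p⟫ = (∑ y ∈ T, m y * ⟪y, p⟫) + e * ⟪z, p⟫ := by
    have h0 := congrArg (fun v => (⟪v, p⟫ : ℝ)) heq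
    simpa only [inner_add_left, sum_inner, real_inner_smul_left] using h0
  have h2 : m x * ⟪x, p⟫ ≤ ∑ y ∈ T, m y * ⟪y, p⟫ :=
    Finset.single_le_sum (f := fun y => m y * ⟪y, p⟫)
      (fun y hy => mul_nonneg (hm y hy) (le_of_lt (hht y hy))) hx
  have hxp := hht x hx
  have hzp := hht z hz
  have h3 : d * ⟪x, p⟫ ≤ m x * ⟪x, p⟫ := mul_le_mul_of_nonneg_right hmd (le_of_lt hxp)
  nlinarith [mul_pos he hzp]



variable (W : Subgroup (V ≃ₗᵢ[ℝ] V))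

/-- The unique reflection with root `α` (junk value if none). -/
noncomputable def rho (α : V) : V ≃ₗᵢ[ℝ] V :=
  if h : ∃ r, r ∈ W ∧ HasRoot r α then h.choose else 1

theorem rho_spec {α : V} (h : α ∈ Phi W) : rho W α ∈ W ∧ HasRoot (rho W α) α := by
  obtain ⟨-, r, hrW, hr⟩ := h
  have hex : ∃ r, r ∈ W ∧ HasRoot r α := ⟨r, hrW, hr⟩
  rw [rho, dif_pos hex]
  exact hex.choose_spec

theorem rho_eq {α : V} {r : V ≃ₗᵢ[ℝ] V} (h : α ∈ Phi W) (hr : HasRoot r α) :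
    r = rho W α := hr.ext (rho_spec W h).2

theorem reflect_mem_Phi {α β : V} (hα : α ∈ Phi W) (hβ : β ∈ Phi W) :
    β - (2 * ⟪α, β⟫) • α ∈ Phi W := by
  have hr := (rho_spec W hα).2
  have hmem := smul_mem_Phi W (rho_spec W hα).1 hβ
  have happ : rho W α β = β - (2 * ⟪α, β⟫) • α := by
    rw [hr.apply_eq β, hα.1]
    norm_num
  rwa [happ] at hmem

variable {W}
variable (hWfin : (W : Set (V ≃ₗᵢ[ℝ] V)).Finite) (p : V)

/-- The positive system determined by `p`. -/
noncomputable def PF : Finset V :=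
  (Set.Finite.subset (Phi_finite W hWfin)
    (fun α (h : α ∈ {α | α ∈ Phi W ∧ 0 < ⟪α, p⟫}) => h.1)).toFinset

theorem mem_PF {α : V} : α ∈ PF hWfin p ↔ α ∈ Phi W ∧ 0 < ⟪α, p⟫ :=
  Set.Finite.mem_toFinset _

variable {Δ : Finset V} {p}
variable (hp : ∀ α ∈ Phi W, ⟪α, p⟫ ≠ 0)
  (hΔsub : Δ ⊆ PF hWfin p) (hcone : ∀ x ∈ PF hWfin p, InCone Δ x)
  (hmin : ∀ a ∈ Δ, ¬ InCone (Δ.erase a) a)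

include hΔsub

theorem delta_ht (hht : True) : ∀ y ∈ Δ, 0 < ⟪y, p⟫ :=
  fun y hy => ((mem_PF hWfin p).mp (hΔsub hy)).2

include hp hcone hmin

theorem delta_obtuse : ∀ α ∈ Δ, ∀ β ∈ Δ, α ≠ β → ⟪α, β⟫ ≤ 0 := by
  intro α hα β hβ hne
  by_contra hpos
  push_neg at hpos
  have hcpos : 0 < 2 * ⟪α, β⟫ := by linarith
  have hαP := (mem_PF hWfin p).mp (hΔsub hα)
  have hβP := (mem_PF hWfin p).mp (hΔsub hβ)
  have hγPhi : β - (2 * ⟪α, β⟫) • α ∈ Phi W := reflect_mem_Phi W hαP.1 hβP.1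
  have hhts : ∀ y ∈ Δ, 0 < ⟪y, p⟫ := fun y hy => ((mem_PF hWfin p).mp (hΔsub hy)).2
  rcases lt_or_gt_of_ne (hp _ hγPhi) with hneg | hposγ
  · have hmem : -(β - (2 * ⟪α, β⟫) • α) ∈ PF hWfin p :=
      (mem_PF hWfin p).mpr ⟨neg_mem_Phi W hγPhi, by rw [inner_neg_left]; linarith⟩
    obtain ⟨m, hm, hγeq⟩ := hcone _ hmem
    have heq : (2 * ⟪α, β⟫) • α = (∑ y ∈ Δ, m y • y) + (1:ℝ) • β := by
      rw [one_smul]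
      linear_combination (norm := module) hγeq
    rcases lt_or_ge (m α) (2 * ⟪α, β⟫) with h1 | h1
    · exact hmin α hα (cone_extract hα hβ (Ne.symm hne) hm (by norm_num) heq h1)
    · exact cone_no_zero hα hβ hhts hm (by norm_num) heq h1
  · have hmem : β - (2 * ⟪α, β⟫) • α ∈ PF hWfin p := (mem_PF hWfin p).mpr ⟨hγPhi, hposγ⟩
    obtain ⟨m, hm, hγeq⟩ := hcone _ hmem
    have heq : (1:ℝ) • β = (∑ y ∈ Δ, m y • y) + (2 * ⟪α, β⟫) • α := by
      rw [one_smul]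
      linear_combination (norm := module) hγeq
    rcases lt_or_ge (m β) 1 with h1 | h1
    · exact hmin β hβ (cone_extract hβ hα hne hm (le_of_lt hcpos) heq h1)
    · exact cone_no_zero hβ hα hhts hm hcpos heq h1

theorem delta_indep (c : V → ℝ) (hsum : ∑ y ∈ Δ, c y • y = 0) : ∀ y ∈ Δ, c y = 0 := by
  have hob := delta_obtuse hWfin hp hΔsub hcone hmin
  have hhts : ∀ y ∈ Δ, 0 < ⟪y, p⟫ := fun y hy => ((mem_PF hWfin p).mp (hΔsub hy)).2
  set cp : V → ℝ := fun y => max (c y) 0 with hcp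
  set cn : V → ℝ := fun y => max (-(c y)) 0 with hcn
  have hcpn : ∀ y, 0 ≤ cp y ∧ 0 ≤ cn y ∧ cp y - cn y = c y ∧ cp y * cn y = 0 := by
    intro y
    rcases le_total (c y) 0 with h | h
    · rw [hcp, hcn]
      simp only [max_eq_right h, max_eq_left (neg_nonneg.mpr h)]
      refine ⟨le_rfl, neg_nonneg.mpr h, by ring, by ring⟩
    · rw [hcp, hcn]
      simp only [max_eq_left h, max_eq_right (neg_nonpos.mpr h)]
      refine ⟨h, le_rfl, by ring, by ring⟩
  have hu : (∑ y ∈ Δ, cp y • y) = (∑ y ∈ Δ, cn y • y) := by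
    have h0 : ∑ y ∈ Δ, (cp y - cn y) • y = 0 := by
      rw [Finset.sum_congr rfl (fun y _ => by rw [(hcpn y).2.2.1])]
      exact hsum
    rw [Finset.sum_congr rfl (fun y (_ : y ∈ Δ) => sub_smul (cp y) (cn y) y),
      Finset.sum_sub_distrib] at h0
    exact sub_eq_zero.mp h0
  set u := ∑ y ∈ Δ, cp y • y with hudef
  have hinner : (⟪u, u⟫ : ℝ) ≤ 0 := by
    calc (⟪u, u⟫:ℝ) = ⟪∑ y ∈ Δ, cp y • y, ∑ z ∈ Δ, cn z • z⟫ := by rw [hudef, ← hu]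
      _ = ∑ y ∈ Δ, ∑ z ∈ Δ, cp y * (cn z * ⟪y, z⟫) := by
          rw [sum_inner]
          refine Finset.sum_congr rfl (fun y _ => ?_)
          rw [real_inner_smul_left, inner_sum]
          rw [Finset.mul_sum]
          refine Finset.sum_congr rfl (fun z _ => ?_)
          rw [real_inner_smul_right]
      _ ≤ 0 := by
          refine Finset.sum_nonpos (fun y hy => Finset.sum_nonpos (fun z hz => ?_))
          by_cases hyz : y = z
          · subst hyz
            rcases mul_eq_zero.mp (hcpn y).2.2.2 with h | h
            · rw [h, zero_mul]
            · rw [h, zero_mul, mul_zero]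
          · have h1 : ⟪y, z⟫ ≤ 0 := hob y hy z hz hyz
            exact mul_nonpos_of_nonneg_of_nonpos (hcpn y).1
              (mul_nonpos_of_nonneg_of_nonpos (hcpn z).2.1 h1)
  have hu0 : u = 0 := by
    have := real_inner_self_nonpos.mp hinner
    exact this
  have hcp0 : ∀ y ∈ Δ, cp y = 0 := by
    have hip : (0:ℝ) = ∑ y ∈ Δ, cp y * ⟪y, p⟫ := by
      rw [show (0:ℝ) = ⟪u, p⟫ by rw [hu0, inner_zero_left], hudef, sum_inner]
      exact Finset.sum_congr rfl (fun y _ => real_inner_smul_left _ _ _)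
    have hall := (Finset.sum_eq_zero_iff_of_nonneg
      (fun y hy => mul_nonneg (hcpn y).1 (le_of_lt (hhts y hy)))).mp hip.symm
    intro y hy
    rcases mul_eq_zero.mp (hall y hy) with h | h
    · exact h
    · exact absurd h (ne_of_gt (hhts y hy))
  have hcn0 : ∀ y ∈ Δ, cn y = 0 := by
    have hv0 : (∑ y ∈ Δ, cn y • y) = 0 := by rw [← hu]; exact hu0
    have hip : (0:ℝ) = ∑ y ∈ Δ, cn y * ⟪y, p⟫ := by
      rw [show (0:ℝ) = ⟪∑ y ∈ Δ, cn y • y, p⟫ by rw [hv0, inner_zero_left], sum_inner]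
      exact Finset.sum_congr rfl (fun y _ => real_inner_smul_left _ _ _)
    have hall := (Finset.sum_eq_zero_iff_of_nonneg
      (fun y hy => mul_nonneg (hcpn y).2.1 (le_of_lt (hhts y hy)))).mp hip.symm
    intro y hy
    rcases mul_eq_zero.mp (hall y hy) with h | h
    · exact h
    · exact absurd h (ne_of_gt (hhts y hy))
  intro y hy
  rw [← (hcpn y).2.2.1, hcp0 y hy, hcn0 y hy, sub_zero]

/-- Lemma (e): a simple reflection keeps the other positive roots positive. -/
theorem pos_of_reflect {α β : V} (hα : α ∈ Δ) (hβ : β ∈ PF hWfin p) (hne : β ≠ α) :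
    β - (2 * ⟪α, β⟫) • α ∈ PF hWfin p := by
  have hαP := (mem_PF hWfin p).mp (hΔsub hα)
  have hβP := (mem_PF hWfin p).mp hβ
  have hγPhi : β - (2 * ⟪α, β⟫) • α ∈ Phi W := reflect_mem_Phi W hαP.1 hβP.1
  obtain ⟨m, hm, hβeq⟩ := hcone β hβ
  have hδ₀ : ∃ δ₀ ∈ Δ, δ₀ ≠ α ∧ 0 < m δ₀ := by
    by_contra hno
    push_neg at hno
    have hβα : β = m α • α := by
      rw [hβeq]
      refine Finset.sum_eq_single_of_mem α hα (fun y hy hyα => ?_)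
      rw [show m y = 0 from le_antisymm (hno y hy hyα) (hm y hy), zero_smul]
    have h1 : ‖β‖ = 1 := hβP.1.1
    have h2 : ‖α‖ = 1 := hαP.1.1
    rw [hβα, norm_smul, h2, mul_one, Real.norm_eq_abs, abs_of_nonneg (hm α hα)] at h1
    exact hne (by rw [hβα, h1, one_smul])
  obtain ⟨δ₀, hδ₀Δ, hδ₀α, hδ₀pos⟩ := hδ₀
  rcases lt_or_gt_of_ne (hp _ hγPhi) with hneg | hposγ
  · exfalso
    have hmem : -(β - (2 * ⟪α, β⟫) • α) ∈ PF hWfin p :=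
      (mem_PF hWfin p).mpr ⟨neg_mem_Phi W hγPhi, by rw [inner_neg_left]; linarith⟩
    obtain ⟨n, hn, hγeq⟩ := hcone _ hmem
    have heq : (∑ y ∈ Δ, (fun y => m y + n y) y • y) + (-(2 * ⟪α, β⟫)) • α = 0 := by
      rw [Finset.sum_congr rfl (fun y (_ : y ∈ Δ) => add_smul (m y) (n y) y),
        Finset.sum_add_distrib]
      linear_combination (norm := module) -hβeq - hγeq
    rw [sum_add_single hα (fun y => m y + n y) (-(2 * ⟪α, β⟫))] at heq
    have := delta_indep hWfin hp hΔsub hcone hmin _ heq δ₀ hδ₀Δ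
    rw [if_neg hδ₀α, add_zero] at this
    have hn0 := hn δ₀ hδ₀Δ
    linarith
  · exact (mem_PF hWfin p).mpr ⟨hγPhi, hposγ⟩

/-- The subgroup generated by the simple reflections. -/
noncomputable def WDelta (Δ : Finset V) : Subgroup (V ≃ₗᵢ[ℝ] V) :=
  Subgroup.closure ((rho W) '' (Δ : Set V))

theorem rho_pos_mem : ∀ n : ℕ, ∀ β, β ∈ PF hWfin p →
    ((PF hWfin p).filter (fun y => ⟪y, p⟫ < ⟪β, p⟫)).card ≤ n →
    rho W β ∈ WDelta (W := W) Δ := by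
  intro n
  induction n using Nat.strong_induction_on with
  | _ n ih =>
    intro β hβ hcard
    by_cases hβΔ : β ∈ Δ
    · exact Subgroup.subset_closure ⟨β, Finset.mem_coe.mpr hβΔ, rfl⟩
    · have hβP := (mem_PF hWfin p).mp hβ
      have hex : ∃ α ∈ Δ, 0 < ⟪α, β⟫ := by
        by_contra hno
        push_neg at hno
        obtain ⟨m, hm, hβeq⟩ := hcone β hβ
        have h1 : (⟪β, β⟫ : ℝ) ≤ 0 := by
          calc (⟪β, β⟫:ℝ) = ⟪β, ∑ y ∈ Δ, m y • y⟫ := by rw [← hβeq]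
            _ = ∑ y ∈ Δ, m y * ⟪β, y⟫ := by
                rw [inner_sum]
                exact Finset.sum_congr rfl (fun y _ => real_inner_smul_right _ _ _)
            _ ≤ 0 := Finset.sum_nonpos (fun y hy => mul_nonpos_of_nonneg_of_nonpos (hm y hy)
                (by rw [real_inner_comm]; exact hno y hy))
        have hβ0 : β = 0 := real_inner_self_nonpos.mp h1
        have hn1 := hβP.1.1
        rw [hβ0, norm_zero] at hn1
        exact one_ne_zero hn1.symm
      obtain ⟨α, hαΔ, hαβ⟩ := hex
      have hne : β ≠ α := fun h => hβΔ (h ▸ hαΔ)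
      have hγP : β - (2 * ⟪α, β⟫) • α ∈ PF hWfin p :=
        pos_of_reflect hWfin hp hΔsub hcone hmin hαΔ hβ hne
      set γ := β - (2 * ⟪α, β⟫) • α with hγ
      have hαp : 0 < ⟪α, p⟫ := ((mem_PF hWfin p).mp (hΔsub hαΔ)).2
      have hhtγ : ⟪γ, p⟫ < ⟪β, p⟫ := by
        rw [hγ, inner_sub_left, real_inner_smul_left]
        nlinarith
      have hss : (PF hWfin p).filter (fun y => ⟪y, p⟫ < ⟪γ, p⟫) ⊂
          (PF hWfin p).filter (fun y => ⟪y, p⟫ < ⟪β, p⟫) := by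
        refine (Finset.ssubset_iff_of_subset ?_).mpr ⟨γ, ?_, ?_⟩
        · intro y hy
          rw [Finset.mem_filter] at *
          exact ⟨hy.1, hy.2.trans hhtγ⟩
        · rw [Finset.mem_filter]
          exact ⟨hγP, hhtγ⟩
        · rw [Finset.mem_filter]
          rintro ⟨-, h⟩
          exact lt_irrefl _ h
      have hrγ := ih _ (lt_of_lt_of_le (Finset.card_lt_card hss) hcard) γ hγP le_rfl
      have hαPhi := ((mem_PF hWfin p).mp (hΔsub hαΔ)).1
      have hγPhi := ((mem_PF hWfin p).mp hγP).1
      have hrα := (rho_spec W hαPhi).2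
      have hrαγ : rho W α γ = β := by
        have hinn : ⟪α, γ⟫ = -⟪α, β⟫ := by
          rw [hγ, inner_sub_right, real_inner_smul_right, real_inner_self_eq_norm_sq, hαPhi.1]
          ring
        rw [hrα.apply_eq γ, hαPhi.1, hinn, hγ]
        norm_num
      have hconj : HasRoot (rho W α * rho W γ * (rho W α)⁻¹) β := by
        have h := (rho_spec W hγPhi).2.conj (w := rho W α)
        rwa [hrαγ] at h
      have heqρ : rho W α * rho W γ * (rho W α)⁻¹ = rho W β := rho_eq W hβP.1 hconj
      rw [← heqρ]
      have hαmem : rho W α ∈ WDelta (W := W) Δ :=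
        Subgroup.subset_closure ⟨α, Finset.mem_coe.mpr hαΔ, rfl⟩
      exact mul_mem (mul_mem hαmem hrγ) (inv_mem hαmem)

theorem refl_mem_WDelta {r : V ≃ₗᵢ[ℝ] V} (hrW : r ∈ W) {β : V} (hr : HasRoot r β) :
    r ∈ WDelta (W := W) Δ := by
  obtain ⟨α, hαPhi, hrα, -⟩ := exists_unit_root W hrW hr
  rcases lt_or_gt_of_ne (hp α hαPhi) with hneg | hpos
  · have hnα : -α ∈ Phi W := neg_mem_Phi W hαPhi
    have hnP : -α ∈ PF hWfin p := (mem_PF hWfin p).mpr ⟨hnα, by rw [inner_neg_left]; linarith⟩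
    have hrnα : HasRoot r (-α) := by
      have := hrα.smul (show (-1:ℝ) ≠ 0 by norm_num)
      rwa [neg_one_smul] at this
    rw [rho_eq W hnα hrnα]
    exact rho_pos_mem hWfin hp hΔsub hcone hmin _ _ hnP le_rfl
  · have hP : α ∈ PF hWfin p := (mem_PF hWfin p).mpr ⟨hαPhi, hpos⟩
    rw [rho_eq W hαPhi hrα]
    exact rho_pos_mem hWfin hp hΔsub hcone hmin _ _ hP le_rfl

omit hΔsub hp hcone hmin in
theorem word_inv (hΔPhi : ∀ δ ∈ Δ, δ ∈ Phi W) :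
    ∀ l : List V, (∀ δ ∈ l, δ ∈ Δ) →
    ((l.map (rho W)).prod)⁻¹ = (l.reverse.map (rho W)).prod := by
  intro l
  induction l with
  | nil => simp
  | cons δ t ihl =>
    intro hl
    rw [List.map_cons, List.prod_cons, mul_inv_rev,
      ihl (fun x hx => hl x (List.mem_cons_of_mem δ hx)),
      List.reverse_cons, List.map_append, List.prod_append]
    simp only [List.map_cons, List.map_nil, List.prod_cons, List.prod_nil, mul_one]
    rw [(rho_spec W (hΔPhi δ (hl δ List.mem_cons_self))).2.inv_eq]

omit hΔsub hp hcone hmin in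
theorem exists_word (hΔPhi : ∀ δ ∈ Δ, δ ∈ Phi W) {w : V ≃ₗᵢ[ℝ] V}
    (hw : w ∈ WDelta (W := W) Δ) :
    ∃ l : List V, (∀ δ ∈ l, δ ∈ Δ) ∧ w = (l.map (rho W)).prod := by
  refine Subgroup.closure_induction ?_ ?_ ?_ ?_ hw
  · rintro x ⟨δ, hδ, rfl⟩
    refine ⟨[δ], ?_, by simp⟩
    intro y hy
    rw [List.mem_singleton] at hy
    subst hy
    exact Finset.mem_coe.mp hδ
  · exact ⟨[], by simp, by simp⟩
  · rintro x y - - ⟨lx, hlx, rfl⟩ ⟨ly, hly, rfl⟩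
    refine ⟨lx ++ ly, ?_, by rw [List.map_append, List.prod_append]⟩
    intro δ hδ
    rcases List.mem_append.mp hδ with h | h
    · exact hlx δ h
    · exact hly δ h
  · rintro x - ⟨l, hl, rfl⟩
    refine ⟨l.reverse, fun δ hδ => hl δ (List.mem_reverse.mp hδ), ?_⟩
    exact word_inv hΔPhi l hl

theorem crossing : ∀ (m : List V), (∀ δ ∈ m, δ ∈ Δ) → ∀ x, x ∈ PF hWfin p →
    ((m.map (rho W)).prod) x ∉ PF hWfin p →
    ∃ a δ b, m = a ++ δ :: b ∧ δ ∈ Δ ∧ ((b.map (rho W)).prod) x = δ := by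
  intro m
  induction m with
  | nil =>
    intro _ x hx hnx
    simp only [List.map_nil, List.prod_nil] at hnx
    exact absurd hx hnx
  | cons δ t ih =>
    intro hm x hx hnx
    have hδΔ : δ ∈ Δ := hm δ List.mem_cons_self
    have hδPhi := ((mem_PF hWfin p).mp (hΔsub hδΔ)).1
    by_cases hu : ((t.map (rho W)).prod) x ∈ PF hWfin p
    · set u := ((t.map (rho W)).prod) x with hudef
      have happ : (((δ :: t).map (rho W)).prod) x = rho W δ u := by
        rw [List.map_cons, List.prod_cons]
        rfl
      by_cases huδ : u = δ
      · exact ⟨[], δ, t, rfl, hδΔ, huδ⟩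
      · exfalso
        apply hnx
        have happ2 : rho W δ u = u - (2 * ⟪δ, u⟫) • δ := by
          rw [(rho_spec W hδPhi).2.apply_eq u, hδPhi.1]
          norm_num
        rw [happ, happ2]
        exact pos_of_reflect hWfin hp hΔsub hcone hmin hδΔ hu huδ
    · obtain ⟨a, δ', b, hsplit, hδ', hb⟩ :=
        ih (fun y hy => hm y (List.mem_cons_of_mem δ hy)) x hx hu
      exact ⟨δ :: a, δ', b, by rw [hsplit]; rfl, hδ', hb⟩

theorem word_eq_one : ∀ n : ℕ, ∀ l : List V, (∀ δ ∈ l, δ ∈ Δ) → l.length ≤ n →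
    (∀ α ∈ PF hWfin p, ((l.map (rho W)).prod) α ∈ PF hWfin p) →
    (l.map (rho W)).prod = 1 := by
  intro n
  induction n using Nat.strong_induction_on with
  | _ n ih =>
    intro l hl hlen hpos
    rcases List.eq_nil_or_concat l with rfl | ⟨l', δk, rfl⟩
    · simp
    · simp only [List.concat_eq_append] at hl hlen hpos ⊢
      have hδkΔ : δk ∈ Δ := hl δk (by simp)
      have hδkP : δk ∈ PF hWfin p := hΔsub hδkΔ
      have hδkPhi := ((mem_PF hWfin p).mp hδkP).1
      have hwprod : ((l' ++ [δk]).map (rho W)).prod = ((l'.map (rho W)).prod) * rho W δk := by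
        rw [List.map_append, List.prod_append]
        simp
      have hneg : ((l'.map (rho W)).prod) δk ∉ PF hWfin p := by
        intro hmem
        have h1 : ((l' ++ [δk]).map (rho W)).prod δk = -((l'.map (rho W)).prod δk) := by
          rw [hwprod]
          show (l'.map (rho W)).prod (rho W δk δk) = _
          rw [(rho_spec W hδkPhi).2.2.1, map_neg]
        have h2 := hpos δk hδkP
        rw [h1] at h2
        have h3 := ((mem_PF hWfin p).mp h2).2
        have h4 := ((mem_PF hWfin p).mp hmem).2
        rw [inner_neg_left] at h3
        linarith
      have hl' : ∀ y ∈ l', y ∈ Δ := fun y hy => hl y (List.mem_append_left _ hy)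
      obtain ⟨a, δ, b, hsplit, hδΔ, hb⟩ :=
        crossing hWfin hp hΔsub hcone hmin l' hl' δk hδkP hneg
      have hδPhi := ((mem_PF hWfin p).mp (hΔsub hδΔ)).1
      have hconj : HasRoot ((b.map (rho W)).prod * rho W δk * ((b.map (rho W)).prod)⁻¹)
          ((b.map (rho W)).prod δk) := (rho_spec W hδkPhi).2.conj
      rw [hb] at hconj
      have hρδ : rho W δ = (b.map (rho W)).prod * rho W δk * ((b.map (rho W)).prod)⁻¹ :=
        (rho_eq W hδPhi hconj).symm
      have hcomm : rho W δ * (b.map (rho W)).prod = (b.map (rho W)).prod * rho W δk := by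
        rw [hρδ, inv_mul_cancel_right]
      have hsq : rho W δk * rho W δk = 1 := (rho_spec W hδkPhi).2.mul_self
      have hweq : ((l' ++ [δk]).map (rho W)).prod = ((a ++ b).map (rho W)).prod := by
        rw [hwprod, hsplit, List.map_append, List.prod_append, List.map_cons, List.prod_cons,
          List.map_append, List.prod_append]
        calc ((a.map (rho W)).prod * (rho W δ * (b.map (rho W)).prod)) * rho W δk
            = ((a.map (rho W)).prod * ((b.map (rho W)).prod * rho W δk)) * rho W δk := by
              rw [hcomm]
          _ = (a.map (rho W)).prod * (b.map (rho W)).prod * (rho W δk * rho W δk) := by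
              group
          _ = (a.map (rho W)).prod * (b.map (rho W)).prod := by rw [hsq, mul_one]
      have hlab : (a ++ b).length + 2 ≤ n := by
        have h5 : (l' ++ [δk]).length = l'.length + 1 := by simp
        have h6 : l'.length = a.length + b.length + 1 := by rw [hsplit]; simp; omega
        have h7 : (a ++ b).length = a.length + b.length := by simp
        omega
      have hres := ih ((a ++ b).length) (by omega) (a ++ b)
        (fun y hy => by
          rcases List.mem_append.mp hy with h | h
          · exact hl' y (by rw [hsplit]; exact List.mem_append_left _ h)
          · exact hl' y (by rw [hsplit]; exact List.mem_append_right _ (List.mem_cons_of_mem δ h)))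
        le_rfl
        (fun α hα => by rw [← hweq]; exact hpos α hα)
      rw [hweq, hres]

theorem eq_one_of_fixes_regular
    (hWgen : W = Subgroup.closure {r : V ≃ₗᵢ[ℝ] V | r ∈ W ∧ IsReflection r})
    {w : V ≃ₗᵢ[ℝ] V} (hwW : w ∈ W) (hwp : w p = p) : w = 1 := by
  have hΔPhi : ∀ δ ∈ Δ, δ ∈ Phi W := fun δ hδ => ((mem_PF hWfin p).mp (hΔsub hδ)).1
  have hWsub : W ≤ WDelta (W := W) Δ := by
    nth_rewrite 1 [hWgen]
    refine (Subgroup.closure_le _).mpr ?_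
    rintro r ⟨hrW, α, hroot⟩
    exact refl_mem_WDelta hWfin hp hΔsub hcone hmin hrW hroot
  obtain ⟨l, hl, hlprod⟩ := exists_word hΔPhi (hWsub hwW)
  have hfix : ∀ α ∈ PF hWfin p, w α ∈ PF hWfin p := by
    intro α hα
    obtain ⟨hαPhi, hαp⟩ := (mem_PF hWfin p).mp hα
    refine (mem_PF hWfin p).mpr ⟨smul_mem_Phi W hwW hαPhi, ?_⟩
    have : ⟪w α, p⟫ = ⟪α, p⟫ := by
      nth_rewrite 1 [← hwp]
      exact w.inner_map_map α p
    rw [this]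
    exact hαp
  have h1 := word_eq_one hWfin hp hΔsub hcone hmin l.length l hl le_rfl
    (by rw [← hlprod]; exact hfix)
  rw [hlprod, h1]


omit hp hΔsub hcone hmin in
theorem exists_root_orth_fixed (hWfin : (W : Set (V ≃ₗᵢ[ℝ] V)).Finite)
    (hWgen : W = Subgroup.closure {r : V ≃ₗᵢ[ℝ] V | r ∈ W ∧ IsReflection r})
    {w : V ≃ₗᵢ[ℝ] V} (hwW : w ∈ W) (hw1 : w ≠ 1) :
    ∃ α ∈ (fixedSpace w)ᗮ, α ∈ Phi W := by
  by_contra hno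
  push_neg at hno
  have hreg : ∀ α ∈ Phi W, ∃ f ∈ fixedSpace w, ⟪α, f⟫ ≠ 0 := by
    intro α hα
    by_contra hall
    push_neg at hall
    refine hno α ?_ hα
    rw [Submodule.mem_orthogonal]
    intro u hu
    rw [real_inner_comm]
    exact hall u hu
  obtain ⟨p, hpF, hp⟩ := exists_regular (fixedSpace w) (Phi_finite W hWfin) hreg
  obtain ⟨Δ, hΔsub, hcone, hmin⟩ := exists_cone_basis (PF hWfin p)
  exact hw1 (eq_one_of_fixes_regular hWfin hp hΔsub hcone hmin hWgen hwW hpF)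

omit hp hΔsub hcone hmin in
theorem steinberg_aux (hWfin : (W : Set (V ≃ₗᵢ[ℝ] V)).Finite)
    (hWgen : W = Subgroup.closure {r : V ≃ₗᵢ[ℝ] V | r ∈ W ∧ IsReflection r})
    (X : Submodule ℝ V) :
    ∀ n : ℕ, ∀ w : V ≃ₗᵢ[ℝ] V, w ∈ W →
      Module.finrank ℝ ((fixedSpace w)ᗮ : Submodule ℝ V) ≤ n → (∀ x ∈ X, w x = x) →
      w ∈ Subgroup.closure {r : V ≃ₗᵢ[ℝ] V | r ∈ W ∧ IsReflection r ∧ ∀ x ∈ X, r x = x} := by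
  intro n
  induction n using Nat.strong_induction_on with
  | _ n ih =>
    intro w hwW hrank hfixX
    by_cases hw1 : w = 1
    · subst hw1
      exact Subgroup.one_mem _
    obtain ⟨α, hαorth, hαPhi⟩ := exists_root_orth_fixed hWfin hWgen hwW hw1
    obtain ⟨r, hrW, hr⟩ := hαPhi.2
    obtain ⟨v, hv⟩ := exists_sub_of_mem_orth w hαorth
    obtain ⟨hfixv, hvnot, hle⟩ := fix_step hr hv
    have hXle : ∀ x ∈ X, x ∈ fixedSpace w := fun x hx => hfixX x hx
    have hrX : ∀ x ∈ X, r x = x := by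
      intro x hx
      apply hr.2.2
      have h2 := (Submodule.mem_orthogonal _ _).mp hαorth x (hXle x hx)
      rw [real_inner_comm] at h2
      exact h2
    have hlt : fixedSpace w < fixedSpace (r * w) := by
      refine lt_of_le_of_ne hle (fun he => hvnot ?_)
      rw [he]
      exact hfixv
    have hrank2 : Module.finrank ℝ ((fixedSpace (r * w))ᗮ : Submodule ℝ V)
        < Module.finrank ℝ ((fixedSpace w)ᗮ : Submodule ℝ V) := by
      have h1 := Submodule.finrank_add_finrank_orthogonal (K := fixedSpace w)
      have h2 := Submodule.finrank_add_finrank_orthogonal (K := fixedSpace (r * w))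
      have h3 := Submodule.finrank_lt_finrank_of_lt hlt
      omega
    have hmem := ih _ (lt_of_lt_of_le hrank2 hrank) (r * w) (W.mul_mem hrW hwW) le_rfl
      (fun x hx => by
        show r (w x) = x
        rw [hfixX x hx]
        exact hrX x hx)
    have hw : w = r * (r * w) := by rw [← mul_assoc, hr.mul_self, one_mul]
    rw [hw]
    exact Subgroup.mul_mem _ (Subgroup.subset_closure ⟨hrW, ⟨α, hr⟩, hrX⟩) hmem

omit hp hΔsub hcone hmin in
theorem fixes_span {w : V ≃ₗᵢ[ℝ] V} {R : Set V} (h : ∀ v ∈ R, w v = v) :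
    ∀ x ∈ Submodule.span ℝ R, w x = x := by
  intro x hx
  induction hx using Submodule.span_induction with
  | mem v hv => exact h v hv
  | zero => exact map_zero w
  | add a b _ _ ha hb => rw [map_add, ha, hb]
  | smul c a _ ha => rw [map_smul, ha]

end OC

/-- A parabolic subgroup `P` of `W` is orthogonally closed (`P°° = P`) iff `P` is the
pointwise stabilizer of a set of roots of `W`. -/
theorem orthogonally_closed_iff_pointwiseStabilizer_of_roots
    (W : Subgroup (V ≃ₗᵢ[ℝ] V))
    (hWfin : (W : Set (V ≃ₗᵢ[ℝ] V)).Finite)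
    (hWgen : W = Subgroup.closure {r : V ≃ₗᵢ[ℝ] V | r ∈ W ∧ IsReflection r})
    (P : Subgroup (V ≃ₗᵢ[ℝ] V)) (X₀ : Submodule ℝ V)
    (hP : P = pointwiseStabilizer W (X₀ : Set V)) :
    orthogonalComplement W (orthogonalComplement W P) = P ↔
      ∃ R : Set V,
        (∀ α ∈ R, α ≠ 0 ∧ ∃ r : V ≃ₗᵢ[ℝ] V, r ∈ W ∧ r α = -α ∧
          ∀ v : V, ⟪α, v⟫ = 0 → r v = v) ∧
        P = pointwiseStabilizer W R := by
  have memPS : ∀ (s : Set V) (x : V ≃ₗᵢ[ℝ] V),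
      x ∈ pointwiseStabilizer W s ↔ x ∈ W ∧ ∀ v ∈ s, x v = v := fun s x => Iff.rfl
  constructor
  · -- forward: orthogonally closed ⟹ stabilizer of roots
    intro hcl
    refine ⟨{α : V | α ≠ 0 ∧ ∃ r, r ∈ orthogonalComplement W P ∧ r ∈ W ∧ OC.HasRoot r α},
      ?_, ?_⟩
    · rintro α ⟨hα0, r, hrOC, hrW, hroot⟩
      exact ⟨hα0, r, hrW, hroot.2.1, hroot.2.2⟩
    · apply le_antisymm
      · -- P ≤ Z_W(R)
        conv_lhs => rw [← hcl]
        refine (Subgroup.closure_le _).mpr ?_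
        rintro t ⟨⟨htW, αt, htroot⟩, hcond⟩
        refine (memPS _ t).mpr ⟨htW, ?_⟩
        rintro v ⟨hv0, r, hrOC, hrW, hroot⟩
        have h1 := hcond r ⟨hrW, ⟨v, hroot⟩⟩ hrOC
        exact OC.HasRoot.fix_root_of_commute hroot htroot h1.1.symm (Ne.symm h1.2)
      · -- Z_W(R) ≤ P
        intro g hg
        obtain ⟨hgW, hgfix⟩ := (memPS _ g).mp hg
        have hgX := OC.fixes_span hgfix
        have hst := OC.steinberg_aux hWfin hWgen
          (Submodule.span ℝ {α : V | α ≠ 0 ∧ ∃ r, r ∈ orthogonalComplement W P ∧ r ∈ W ∧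
            OC.HasRoot r α}) _ g hgW le_rfl hgX
        rw [← hcl]
        refine ((Subgroup.closure_le _).mpr ?_) hst
        rintro u ⟨huW, ⟨γ, hγroot⟩, huX⟩
        apply Subgroup.subset_closure
        refine ⟨⟨huW, ⟨γ, hγroot⟩⟩, ?_⟩
        rintro s ⟨hsW, ⟨β, hsroot⟩⟩ hsOC
        have hβroot : OC.HasRoot s β := hsroot
        have hβR : β ∈ {α : V | α ≠ 0 ∧ ∃ r, r ∈ orthogonalComplement W P ∧ r ∈ W ∧
            OC.HasRoot r α} := ⟨hβroot.1, s, hsOC, hsW, hβroot⟩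
        have huβ : u β = β := huX β (Submodule.subset_span hβR)
        have hγu : OC.HasRoot u γ := hγroot
        have horth : ⟪γ, β⟫ = 0 := hγu.fix_iff.mp huβ
        exact hγu.commute_of_orth hβroot horth
  · -- backward: stabilizer of roots ⟹ orthogonally closed
    rintro ⟨R, hR, hPR⟩
    apply le_antisymm
    · -- P°° ≤ P
      refine (Subgroup.closure_le _).mpr ?_
      rintro t ⟨⟨htW, αt, htroot⟩, hcond⟩
      rw [hPR]
      refine (memPS _ t).mpr ⟨htW, ?_⟩
      intro v hvR
      obtain ⟨hv0, r, hrW, hrneg, hrfix⟩ := hR v hvR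
      have hroot_r : OC.HasRoot r v := ⟨hv0, hrneg, hrfix⟩
      have htroot' : OC.HasRoot t αt := htroot
      have hrOC : r ∈ orthogonalComplement W P := by
        apply Subgroup.subset_closure
        refine ⟨⟨hrW, ⟨v, hroot_r⟩⟩, ?_⟩
        rintro s ⟨hsW, ⟨β, hsroot⟩⟩ hsP
        have hβroot : OC.HasRoot s β := hsroot
        have hsv : s v = v := by
          rw [hPR] at hsP
          exact ((memPS _ s).mp hsP).2 v hvR
        have horth : ⟪v, β⟫ = 0 := by
          rw [real_inner_comm]
          exact hβroot.fix_iff.mp hsv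
        exact hroot_r.commute_of_orth hβroot horth
      have h1 := hcond r ⟨hrW, ⟨v, hroot_r⟩⟩ hrOC
      exact hroot_r.fix_root_of_commute htroot' h1.1.symm (Ne.symm h1.2)
    · -- P ≤ P°°
      intro g hg
      rw [hP] at hg
      obtain ⟨hgW, hgfix⟩ := (memPS _ g).mp hg
      have hst := OC.steinberg_aux hWfin hWgen X₀ _ g hgW le_rfl
        (fun x hx => hgfix x hx)
      refine ((Subgroup.closure_le _).mpr ?_) hst
      rintro u ⟨huW, ⟨γ, hγroot⟩, huX⟩
      have hγu : OC.HasRoot u γ := hγroot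
      apply Subgroup.subset_closure
      refine ⟨⟨huW, ⟨γ, hγroot⟩⟩, ?_⟩
      rintro s ⟨hsW, ⟨β, hsroot⟩⟩ hsOC
      have hβroot : OC.HasRoot s β := hsroot
      have hOCfix : orthogonalComplement W P ≤ pointwiseStabilizer W {γ} := by
        refine (Subgroup.closure_le _).mpr ?_
        rintro t ⟨⟨htW, αt, htroot⟩, hcond⟩
        have htroot' : OC.HasRoot t αt := htroot
        have huP : u ∈ P := by
          rw [hP]
          exact (memPS _ u).mpr ⟨huW, fun x hx => huX x hx⟩
        have h1 := hcond u ⟨huW, ⟨γ, hγroot⟩⟩ huP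
        refine (memPS _ t).mpr ⟨htW, ?_⟩
        intro v hv
        rw [Set.mem_singleton_iff] at hv
        subst hv
        exact hγu.fix_root_of_commute htroot' h1.1.symm (Ne.symm h1.2)
      have hsγ : s γ = γ := ((memPS _ s).mp (hOCfix hsOC)).2 γ rfl
      have horth : ⟪γ, β⟫ = 0 := by
        rw [real_inner_comm]
        exact hβroot.fix_iff.mp hsγ
      exact hγu.commute_of_orth hβroot horth
end
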